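/- Let V and W be Jordan cells of Ã_ℝ. Then V is isomorphic to W if and only if there exists a k-linear isomorphism A : V(e^{iα_0}) → W(e^{iα_0}) such that V̂ = A^{-1} ∘ Ŵ ∘ A, where V̂ and Ŵ are the monodromy automorphisms of V and W at e^{iα_0}. -/

import Mathlib

open Set

noncomputable section

/-- A continuous quiver of type Ã: the data of the (even) set `S` of sinks/sources
on the circle, described via the cardinality `2*m`-ish data `m` and the angles `α`.
When `m = 0` we are in the cyclic case and fix `α j = π j`. -/
structure AtR where
  m : ℕ
  α : ℤ → ℝ
  mono : StrictMono α
  cyc : m = 0 → ∀ j : ℤ, α j = Real.pi * j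
  per : m ≠ 0 → ∀ j : ℤ, α (j + 2 * m) = α j + 2 * Real.pi
  base0 : 0 ≤ α 0
  base1 : α 0 < 2 * Real.pi

namespace AtR

variable (Q : AtR)

/-- `covRel θ φ` holds iff there is a morphism `e^{iθ} → e^{iφ}` in the continuous
quiver of type Ã, presented on the universal cover `ℝ` of the circle.
In the cyclic case (`m = 0`) morphisms go counterclockwise, i.e. `θ ≤ φ`;
otherwise a morphism stays within one (lifted) arc `[α j, α (j+1)]` and goes
down on even arcs (towards the sink `α j`) and up on odd arcs. -/
def covRel (θ φ : ℝ) : Prop :=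
  if Q.m = 0 then θ ≤ φ
  else ∃ j : ℤ, θ ∈ Set.Icc (Q.α j) (Q.α (j + 1)) ∧ φ ∈ Set.Icc (Q.α j) (Q.α (j + 1)) ∧
    ((Even j ∧ φ ≤ θ) ∨ (¬ Even j ∧ θ ≤ φ))

variable {Q}

lemma arcs_overlap {j j' : ℤ} {x : ℝ}
    (hj : x ∈ Set.Icc (Q.α j) (Q.α (j + 1))) (hj' : x ∈ Set.Icc (Q.α j') (Q.α (j' + 1)))
    (hne : j ≠ j') :
    (j' = j + 1 ∧ x = Q.α (j + 1)) ∨ (j = j' + 1 ∧ x = Q.α j) := by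
  rcases lt_or_gt_of_ne hne with h | h
  · left
    have h1 : j + 1 ≤ j' := by omega
    have h2 : Q.α (j + 1) ≤ Q.α j' := Q.mono.monotone h1
    have hx : x = Q.α (j + 1) := le_antisymm hj.2 (le_trans h2 hj'.1)
    have hx2 : Q.α (j + 1) = Q.α j' := le_antisymm h2 (hx ▸ hj'.1)
    exact ⟨(Q.mono.injective hx2).symm, hx⟩
  · right
    have h1 : j' + 1 ≤ j := by omega
    have h2 : Q.α (j' + 1) ≤ Q.α j := Q.mono.monotone h1
    have hx : x = Q.α (j' + 1) := le_antisymm hj'.2 (le_trans h2 hj.1)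
    have hx2 : Q.α (j' + 1) = Q.α j := le_antisymm h2 (hx ▸ hj.1)
    exact ⟨Q.mono.injective hx2.symm, hx.trans hx2⟩

/-- Key lemma: if there are morphisms `θ → φ` and `φ → ψ` then `φ` lies in the
convex hull of `{θ, ψ}`. -/
lemma covRel_hull {θ φ ψ : ℝ} (h1 : Q.covRel θ φ) (h2 : Q.covRel φ ψ) :
    min θ ψ ≤ φ ∧ φ ≤ max θ ψ := by
  unfold covRel at h1 h2
  by_cases hm : Q.m = 0
  · rw [if_pos hm] at h1 h2
    exact ⟨le_trans (min_le_left _ _) h1, le_trans h2 (le_max_right _ _)⟩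
  · rw [if_neg hm] at h1 h2
    obtain ⟨j, hθ, hφ, hp⟩ := h1
    obtain ⟨j2, hφ2, hψ, hp2⟩ := h2
    by_cases hjj : j = j2
    · subst hjj
      rcases hp with ⟨he, hle⟩ | ⟨ho, hle⟩ <;> rcases hp2 with ⟨he2, hle2⟩ | ⟨ho2, hle2⟩
      · exact ⟨le_trans (min_le_right _ _) hle2, le_trans hle (le_max_left _ _)⟩
      · exact absurd he ho2
      · exact absurd he2 ho
      · exact ⟨le_trans (min_le_left _ _) hle, le_trans hle2 (le_max_right _ _)⟩
    · rcases arcs_overlap hφ hφ2 hjj with ⟨hj2, hφe⟩ | ⟨hj2, hφe⟩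
      · -- j2 = j + 1, φ = α (j+1)
        rcases hp with ⟨he, hle⟩ | ⟨ho, hle⟩
        · -- Even j, φ ≤ θ and θ ≤ α (j+1) = φ so θ = φ
          have hθφ : θ = φ := le_antisymm (hφe ▸ hθ.2) hle
          rw [← hθφ]
          exact ⟨min_le_left _ _, le_max_left _ _⟩
        · -- Odd j so j2 = j+1 is even
          have he2 : Even j2 := by
            rw [hj2]; rcases Int.even_or_odd j with h | h
            · exact absurd h ho
            · exact h.add_one
          rcases hp2 with ⟨_, hle2⟩ | ⟨ho2, _⟩
          · -- ψ ≤ φ, but φ = α j2 is the bottom of the arc of j2, so ψ = φ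
            have hψφ : ψ = φ := by
              have : Q.α j2 ≤ ψ := hψ.1
              have hb : φ = Q.α j2 := by rw [hj2]; exact hφe
              linarith [hb ▸ this]
            rw [← hψφ]
            exact ⟨min_le_right _ _, le_max_right _ _⟩
          · exact absurd he2 ho2
      · -- j = j2 + 1, φ = α j
        rcases hp2 with ⟨he2, hle2⟩ | ⟨ho2, hle2⟩
        · -- Even j2, ψ ≤ φ; φ = α j = α (j2+1) is the top of arc j2... and j odd
          have ho : ¬ Even j := by
            rw [hj2]; intro h
            exact (Int.even_add_one.mp h) he2
          rcases hp with ⟨he', _⟩ | ⟨_, hle⟩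
          · exact absurd he' ho
          · -- θ ≤ φ, φ = α j is bottom of arc j, so θ = φ
            have hθφ : θ = φ := le_antisymm hle (hφe ▸ hθ.1)
            rw [← hθφ]
            exact ⟨min_le_left _ _, le_max_left _ _⟩
        · -- Odd j2, φ ≤ ψ; φ = α (j2+1) top of arc j2 so ψ = φ
          have hψφ : ψ = φ := by
            have hup : ψ ≤ Q.α (j2 + 1) := hψ.2
            have hb : φ = Q.α (j2 + 1) := by rw [← hj2]; exact hφe
            linarith [hb ▸ hup]
          rw [← hψφ]
          exact ⟨min_le_right _ _, le_max_right _ _⟩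

lemma covRel_up (j : ℤ) (h : Q.m = 0 ∨ ¬ Even j) : Q.covRel (Q.α j) (Q.α (j + 1)) := by
  unfold covRel
  split_ifs with hm
  · exact Q.mono.monotone (by omega)
  · rcases h with h0 | hodd
    · exact absurd h0 hm
    · exact ⟨j, ⟨le_rfl, Q.mono.monotone (by omega)⟩,
        ⟨Q.mono.monotone (by omega), le_rfl⟩,
        Or.inr ⟨hodd, Q.mono.monotone (by omega)⟩⟩

lemma covRel_down (j : ℤ) (hm : Q.m ≠ 0) (he : Even j) :
    Q.covRel (Q.α (j + 1)) (Q.α j) := by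
  unfold covRel
  rw [if_neg hm]
  exact ⟨j, ⟨Q.mono.monotone (by omega), le_rfl⟩, ⟨le_rfl, Q.mono.monotone (by omega)⟩,
    Or.inl ⟨he, Q.mono.monotone (by omega)⟩⟩

variable (Q)

/-- The number of arcs used to travel once around the circle. -/
def periodN : ℕ := if Q.m = 0 then 2 else 2 * Q.m

lemma periodN_pos : 0 < Q.periodN := by
  unfold periodN; split_ifs <;> omega

lemma α_periodN : Q.α (Q.periodN : ℤ) = Q.α 0 + 2 * Real.pi := by
  unfold periodN
  split_ifs with hm
  · have h2 : ((2:ℕ):ℤ) = 2 := by norm_cast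
    rw [h2, Q.cyc hm 2, Q.cyc hm 0]
    push_cast; ring
  · have := Q.per hm 0
    rw [zero_add] at this
    rw [← this]
    norm_cast

end AtR
/-- A representation (i.e. an `S¹` persistence module) of the continuous quiver of
type Ã, presented equivariantly on the universal cover: vector spaces `obj θ`,
linear maps along every morphism of the quiver (encoded by `covRel`), and a
periodicity isomorphism `per` identifying `obj (θ + 2π)` with `obj θ`,
compatibly with the maps. -/
structure SRep (k : Type) [Field k] (Q : AtR) where
  obj : ℝ → Type
  [instAdd : ∀ θ, AddCommGroup (obj θ)]
  [instMod : ∀ θ, Module k (obj θ)]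
  map : ∀ {θ φ : ℝ}, Q.covRel θ φ → (obj θ →ₗ[k] obj φ)
  map_id : ∀ (θ : ℝ) (h : Q.covRel θ θ), map h = LinearMap.id
  map_comp : ∀ {θ φ ψ : ℝ} (h1 : Q.covRel θ φ) (h2 : Q.covRel φ ψ) (h3 : Q.covRel θ ψ),
      map h3 = (map h2).comp (map h1)
  per : ∀ θ : ℝ, obj (θ + 2 * Real.pi) ≃ₗ[k] obj θ
  per_map : ∀ {θ φ : ℝ} (h : Q.covRel θ φ) (h' : Q.covRel (θ + 2 * Real.pi) (φ + 2 * Real.pi)),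
      (map h).comp (per θ).toLinearMap = ((per φ).toLinearMap).comp (map h')

attribute [instance] SRep.instAdd SRep.instMod

namespace SRep

variable {k : Type} [Field k] {Q : AtR}

lemma per_map_apply (V : SRep k Q) {θ φ : ℝ} (h : Q.covRel θ φ)
    (h' : Q.covRel (θ + 2 * Real.pi) (φ + 2 * Real.pi)) (x : V.obj (θ + 2 * Real.pi)) :
    V.map h (V.per θ x) = V.per φ (V.map h' x) :=
  LinearMap.congr_fun (V.per_map h h') x

/-- Transport along an equality of points of the cover. -/
def castO (V : SRep k Q) {a b : ℝ} (h : a = b) : V.obj a ≃ₗ[k] V.obj b :=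
  h ▸ LinearEquiv.refl k (V.obj a)

/-- A family of linear maps is a morphism of representations if it is natural with
respect to all the structure maps and the periodicity isomorphisms. -/
def IsHomFam (V W : SRep k Q) (f : ∀ θ, V.obj θ →ₗ[k] W.obj θ) : Prop :=
  (∀ {θ φ : ℝ} (h : Q.covRel θ φ) (v : V.obj θ), f φ (V.map h v) = W.map h (f θ v)) ∧
  (∀ (θ : ℝ) (v : V.obj (θ + 2 * Real.pi)), f θ (V.per θ v) = W.per θ (f (θ + 2 * Real.pi) v))

/-- Two representations are isomorphic if there is a family of linear isomorphisms
natural with respect to the structure maps and the periodicity isomorphisms. -/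
def RepIso (V W : SRep k Q) : Prop :=
  ∃ e : ∀ θ, V.obj θ ≃ₗ[k] W.obj θ,
    (∀ {θ φ : ℝ} (h : Q.covRel θ φ) (v : V.obj θ), e φ (V.map h v) = W.map h (e θ v)) ∧
    (∀ (θ : ℝ) (v : V.obj (θ + 2 * Real.pi)), e θ (V.per θ v) = W.per θ (e (θ + 2 * Real.pi) v))

/-- `U` is a (direct) summand of `V`. -/
def SummandOf (U V : SRep k Q) : Prop :=
  ∃ (f : ∀ θ, U.obj θ →ₗ[k] V.obj θ) (g : ∀ θ, V.obj θ →ₗ[k] U.obj θ),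
    IsHomFam U V f ∧ IsHomFam V U g ∧ ∀ (θ : ℝ) (u : U.obj θ), g θ (f θ u) = u

/-- A representation is nonzero if some of its spaces is nonzero. -/
def Nonzero (V : SRep k Q) : Prop := ∃ (θ : ℝ) (v : V.obj θ), v ≠ 0

/-- Pointwise finite-dimensional. -/
def Pwf (V : SRep k Q) : Prop := ∀ θ, FiniteDimensional k (V.obj θ)

/-- Binary direct sum of representations. -/
def prod (V W : SRep k Q) : SRep k Q where
  obj θ := V.obj θ × W.obj θ
  map h := (V.map h).prodMap (W.map h)
  map_id θ h := by
    rw [V.map_id θ h, W.map_id θ h]; exact LinearMap.prodMap_id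
  map_comp h1 h2 h3 := by
    rw [V.map_comp h1 h2 h3, W.map_comp h1 h2 h3]
    exact (LinearMap.prodMap_comp _ _ _ _).symm
  per θ := (V.per θ).prodCongr (W.per θ)
  per_map h h' := by
    apply LinearMap.ext
    rintro ⟨a, b⟩
    simp only [LinearMap.comp_apply, LinearEquiv.coe_coe, LinearMap.prodMap_apply,
      LinearEquiv.prodCongr_apply]
    exact Prod.ext (V.per_map_apply h h' a) (W.per_map_apply h h' b)

/-- Arbitrary direct sums of representations. -/
def dsum {B : Type} (A : B → SRep k Q) : SRep k Q where
  obj θ := Π₀ b, (A b).obj θ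
  map h := DFinsupp.mapRange.linearMap fun b => (A b).map h
  map_id θ h := by
    have : (fun b => (A b).map h) = fun b => (LinearMap.id : (A b).obj θ →ₗ[k] _) := by
      funext b; exact (A b).map_id θ h
    rw [this]; exact DFinsupp.mapRange.linearMap_id
  map_comp h1 h2 h3 := by
    have : (fun b => (A b).map h3) = fun b => ((A b).map h2).comp ((A b).map h1) := by
      funext b; exact (A b).map_comp h1 h2 h3
    rw [this]; exact DFinsupp.mapRange.linearMap_comp _ _
  per θ := DFinsupp.mapRange.linearEquiv fun b => (A b).per θ
  per_map h h' := by
    apply LinearMap.ext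
    intro x
    ext b
    simp only [LinearMap.comp_apply, LinearEquiv.coe_coe,
      DFinsupp.mapRange.linearEquiv_apply, DFinsupp.mapRange.linearMap_apply,
      DFinsupp.mapRange_apply]
    exact (A b).per_map_apply h h' (x b)

/-- Indecomposability. -/
def Indecomposable (V : SRep k Q) : Prop :=
  V.Nonzero ∧ ∀ A B : SRep k Q, A.Nonzero → B.Nonzero → ¬ RepIso V (A.prod B)

end SRep
/-! ## Bars -/

/-- The basis of the bar `M_I` at the point `e^{iθ}`: the set `ξ⁻¹(e^{iθ}) ∩ I`. -/
def barIdx (I : Set ℝ) (θ : ℝ) : Type :=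
  {β : ℝ // β ∈ I ∧ ∃ n : ℤ, β = θ + 2 * Real.pi * n}

/-- The canonical identification of the bars' bases over `θ + 2π` and `θ`. -/
def barShift (I : Set ℝ) (θ : ℝ) : barIdx I (θ + 2 * Real.pi) ≃ barIdx I θ where
  toFun b := ⟨b.1, b.2.1, by
    obtain ⟨n, hn⟩ := b.2.2
    exact ⟨n + 1, by push_cast; linarith⟩⟩
  invFun b := ⟨b.1, b.2.1, by
    obtain ⟨n, hn⟩ := b.2.2
    exact ⟨n - 1, by push_cast; linarith⟩⟩
  left_inv b := by apply Subtype.ext; rfl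
  right_inv b := by apply Subtype.ext; rfl

variable (k : Type) [Field k]

/-- The structure map of the bar `M_I` along a morphism `θ → φ`:
a basis vector `b_β` is sent to `b_{β - θ + φ}` when `β - θ + φ ∈ I` and to `0`
otherwise. -/
def barMapHom (I : Set ℝ) (θ φ : ℝ) :
    (barIdx I θ →₀ k) →ₗ[k] (barIdx I φ →₀ k) := by
  classical
  exact Finsupp.linearCombination k (fun β : barIdx I θ =>
    if h : β.1 - θ + φ ∈ I then
      Finsupp.single (⟨β.1 - θ + φ, h, by
        obtain ⟨n, hn⟩ := β.2.2
        exact ⟨n, by rw [hn]; ring⟩⟩ : barIdx I φ) (1 : k)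
    else 0)

variable {k}

namespace SRep

variable {Q : AtR}

/-- `V` is (isomorphic to) the bar `M_I` on the bounded interval `I ⊂ ℝ`. -/
def BarOn (I : Set ℝ) (V : SRep k Q) : Prop :=
  I.Nonempty ∧ Bornology.IsBounded I ∧ I.OrdConnected ∧
  ∃ e : ∀ θ, V.obj θ ≃ₗ[k] (barIdx I θ →₀ k),
    (∀ {θ φ : ℝ} (h : Q.covRel θ φ) (v : V.obj θ),
        e φ (V.map h v) = barMapHom k I θ φ (e θ v)) ∧
    (∀ (θ : ℝ) (v : V.obj (θ + 2 * Real.pi)),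
        e θ (V.per θ v) = Finsupp.equivMapDomain (barShift I θ) (e (θ + 2 * Real.pi) v))

/-- `V` is a bar. -/
def IsBar (V : SRep k Q) : Prop := ∃ I : Set ℝ, BarOn I V

end SRep
/-! ## Jordan cells -/

namespace SRep

variable {k : Type} [Field k] {Q : AtR}

/-- One step of the monodromy: the isomorphism `V(α j) ≃ V(α (j+1))` obtained
from the structure map along the arc (or its inverse, depending on the
orientation of the arc). -/
def step (V : SRep k Q)
    (hiso : ∀ ⦃θ φ : ℝ⦄ (h : Q.covRel θ φ), Function.Bijective (V.map h)) (j : ℤ) :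
    V.obj (Q.α j) ≃ₗ[k] V.obj (Q.α (j + 1)) :=
  if h : Q.m = 0 ∨ ¬ Even j then
    LinearEquiv.ofBijective _ (hiso (AtR.covRel_up j h))
  else
    (LinearEquiv.ofBijective _ (hiso (AtR.covRel_down j
      (by push_neg at h; exact h.1) (by push_neg at h; exact h.2)))).symm

/-- The zig-zag isomorphism from `V(α 0)` to `V(α n)`. -/
def zig (V : SRep k Q)
    (hiso : ∀ ⦃θ φ : ℝ⦄ (h : Q.covRel θ φ), Function.Bijective (V.map h)) :
    (n : ℕ) → (V.obj (Q.α 0) ≃ₗ[k] V.obj (Q.α (n : ℤ)))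
  | 0 => V.castO (congrArg Q.α (by norm_num))
  | (n + 1) => ((V.zig hiso n).trans (V.step hiso (n : ℤ))).trans
      (V.castO (congrArg Q.α (by push_cast; ring)))

/-- The monodromy automorphism `V̂` of `V(α 0)`: travel once counterclockwise
around the circle (via `zig`) and come back via the periodicity isomorphism. -/
def monodromy (V : SRep k Q)
    (hiso : ∀ ⦃θ φ : ℝ⦄ (h : Q.covRel θ φ), Function.Bijective (V.map h)) :
    V.obj (Q.α 0) ≃ₗ[k] V.obj (Q.α 0) :=
  ((V.zig hiso Q.periodN).trans (V.castO Q.α_periodN)).trans (V.per (Q.α 0))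

/-- `V` is a Jordan cell: its spaces have a constant finite dimension `d ≥ 1`,
all its structure maps are isomorphisms, and `V(α 0)` admits no direct sum
decomposition into two nonzero subspaces invariant under the monodromy. -/
structure IsJordanCell (V : SRep k Q) : Prop where
  bij : ∀ ⦃θ φ : ℝ⦄ (h : Q.covRel θ φ), Function.Bijective (V.map h)
  dim : ∃ d : ℕ, 1 ≤ d ∧ ∀ θ, Module.finrank k (V.obj θ) = d
  indec : ∀ U W : Submodule k (V.obj (Q.α 0)), IsCompl U W →
      (∀ u ∈ U, V.monodromy bij u ∈ U) → (∀ w ∈ W, V.monodromy bij w ∈ W) →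
      U = ⊥ ∨ W = ⊥

end SRep
/-! ## Restriction -/

/-- The periodization of a subset of `ℝ`: the full preimage under `ξ` of its image
in the circle. -/
def periodize (s : Set ℝ) : Set ℝ := {θ | ∃ n : ℤ, θ + 2 * Real.pi * n ∈ s}

lemma periodize_shift (s : Set ℝ) (θ : ℝ) :
    θ ∈ periodize s ↔ θ + 2 * Real.pi ∈ periodize s := by
  constructor
  · rintro ⟨n, hn⟩
    refine ⟨n - 1, ?_⟩
    push_cast
    rw [show θ + 2 * Real.pi + 2 * Real.pi * ((n : ℝ) - 1) = θ + 2 * Real.pi * (n : ℝ) from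
      by ring]
    exact hn
  · rintro ⟨n, hn⟩
    refine ⟨n + 1, ?_⟩
    push_cast
    rw [show θ + 2 * Real.pi * ((n : ℝ) + 1) = θ + 2 * Real.pi + 2 * Real.pi * (n : ℝ) from
      by ring]
    exact hn

namespace SRep

open Classical

variable {k : Type} [Field k] {Q : AtR}

/-- The restriction `V|_A` of a representation to a (2π-periodic) subset `A ⊂ ℝ`
corresponding to a subset of the circle.  Its space at `θ ∈ A` is `V(θ)` and `0`
elsewhere; its structure map along a morphism `θ → φ` is `V(θ,φ)` when every
point through which the morphism factors lies in `A` (the set of such points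
being the interval `[min θ φ, max θ φ]`), and `0` otherwise. -/
def restrict (V : SRep k Q) (A : Set ℝ) (hA : ∀ θ, θ ∈ A ↔ θ + 2 * Real.pi ∈ A) :
    SRep k Q where
  obj θ := PLift (θ ∈ A) → V.obj θ
  map {θ φ} h :=
    { toFun := fun F _ =>
        if c : Set.Icc (min θ φ) (max θ φ) ⊆ A then
          V.map h (F ⟨c ⟨min_le_left θ φ, le_max_left θ φ⟩⟩) else 0
      map_add' := by
        intro F G; funext hφ
        by_cases c : Set.Icc (min θ φ) (max θ φ) ⊆ A <;> simp [c]
      map_smul' := by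
        intro a F; funext hφ
        by_cases c : Set.Icc (min θ φ) (max θ φ) ⊆ A <;> simp [c] }
  map_id θ h := by
    apply LinearMap.ext; intro F; funext hφ
    have c : Set.Icc (min θ θ) (max θ θ) ⊆ A := by
      rw [min_self, max_self, Set.Icc_self]
      exact Set.singleton_subset_iff.mpr hφ.down
    simp only [LinearMap.coe_mk, AddHom.coe_mk, LinearMap.id_coe, id_eq]
    rw [dif_pos c, V.map_id θ h]
    rfl
  map_comp {θ φ ψ} h1 h2 h3 := by
    apply LinearMap.ext; intro F; funext hψ
    have hkey := AtR.covRel_hull h1 h2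
    have s1 : Set.Icc (min θ φ) (max θ φ) ⊆ Set.Icc (min θ ψ) (max θ ψ) :=
      Set.Icc_subset_Icc (le_min (min_le_left θ ψ) hkey.1) (max_le (le_max_left θ ψ) hkey.2)
    have s2 : Set.Icc (min φ ψ) (max φ ψ) ⊆ Set.Icc (min θ ψ) (max θ ψ) :=
      Set.Icc_subset_Icc (le_min hkey.1 (min_le_right θ ψ)) (max_le hkey.2 (le_max_right θ ψ))
    by_cases c1 : Set.Icc (min θ φ) (max θ φ) ⊆ A
    · by_cases c2 : Set.Icc (min φ ψ) (max φ ψ) ⊆ A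
      · have c3 : Set.Icc (min θ ψ) (max θ ψ) ⊆ A := by
          intro z hz
          rcases le_total θ ψ with hθψ | hθψ
          · rw [min_eq_left hθψ, max_eq_right hθψ] at hz
            rcases le_total z φ with hzφ | hzφ
            · exact c1 ⟨le_trans (min_le_left θ φ) hz.1, le_trans hzφ (le_max_right θ φ)⟩
            · exact c2 ⟨le_trans (min_le_left φ ψ) hzφ, le_trans hz.2 (le_max_right φ ψ)⟩
          · rw [min_eq_right hθψ, max_eq_left hθψ] at hz
            rcases le_total z φ with hzφ | hzφ
            · exact c2 ⟨le_trans (min_le_right φ ψ) hz.1, le_trans hzφ (le_max_left φ ψ)⟩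
            · exact c1 ⟨le_trans (min_le_right θ φ) hzφ, le_trans hz.2 (le_max_left θ φ)⟩
        simp only [LinearMap.coe_mk, AddHom.coe_mk, LinearMap.comp_apply]
        rw [dif_pos c3, dif_pos c2, dif_pos c1, V.map_comp h1 h2 h3]
        rfl
      · have c3 : ¬ Set.Icc (min θ ψ) (max θ ψ) ⊆ A := fun c3 => c2 fun z hz => c3 (s2 hz)
        simp only [LinearMap.coe_mk, AddHom.coe_mk, LinearMap.comp_apply]
        rw [dif_neg c3, dif_neg c2]
    · have c3 : ¬ Set.Icc (min θ ψ) (max θ ψ) ⊆ A := fun c3 => c1 fun z hz => c3 (s1 hz)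
      simp only [LinearMap.coe_mk, AddHom.coe_mk, LinearMap.comp_apply]
      rw [dif_neg c3]
      by_cases c2 : Set.Icc (min φ ψ) (max φ ψ) ⊆ A
      · rw [dif_pos c2, dif_neg c1, map_zero]
      · rw [dif_neg c2]
  per θ :=
    { toFun := fun F hθ => V.per θ (F ⟨(hA θ).mp hθ.down⟩)
      map_add' := by intro F G; funext hθ; simp
      map_smul' := by intro a F; funext hθ; simp
      invFun := fun G h2 => (V.per θ).symm (G ⟨(hA θ).mpr h2.down⟩)
      left_inv := by intro F; funext h2; simp
      right_inv := by intro G; funext hθ; simp }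
  per_map {θ φ} h h' := by
    apply LinearMap.ext; intro F; funext hφ
    have e1 : min (θ + 2 * Real.pi) (φ + 2 * Real.pi) = min θ φ + 2 * Real.pi :=
      min_add_add_right θ φ _
    have e2 : max (θ + 2 * Real.pi) (φ + 2 * Real.pi) = max θ φ + 2 * Real.pi :=
      max_add_add_right θ φ _
    have hcc : (Set.Icc (min (θ + 2 * Real.pi) (φ + 2 * Real.pi))
        (max (θ + 2 * Real.pi) (φ + 2 * Real.pi)) ⊆ A) ↔
        (Set.Icc (min θ φ) (max θ φ) ⊆ A) := by
      rw [e1, e2]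
      constructor
      · intro c z hz
        rw [hA z]
        exact c ⟨by linarith [hz.1], by linarith [hz.2]⟩
      · intro c z hz
        have h2 : z - 2 * Real.pi ∈ Set.Icc (min θ φ) (max θ φ) :=
          ⟨by linarith [hz.1], by linarith [hz.2]⟩
        have h3 := (hA (z - 2 * Real.pi)).mp (c h2)
        simpa using h3
    simp only [LinearMap.coe_mk, AddHom.coe_mk, LinearMap.comp_apply, LinearEquiv.coe_coe,
      LinearEquiv.coe_mk]
    by_cases c : Set.Icc (min θ φ) (max θ φ) ⊆ A
    · rw [dif_pos c, dif_pos (hcc.mpr c)]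
      exact V.per_map_apply h h' _
    · rw [dif_neg c, dif_neg (fun cc => c (hcc.mp cc)), map_zero]

/-- `V` is finitistic: it is pointwise finite-dimensional and for each arc
`R̄_n = [α n, α (n+1)]`, every bar in the bar code decomposition of the
restriction `V|_{R̄_n}` has support touching an endpoint of the arc. -/
def Finitistic (V : SRep k Q) : Prop :=
  Pwf V ∧ ∀ n : ℤ, ∃ (B : Type) (Wb : B → SRep k Q) (I : B → Set ℝ),
    (∀ b, BarOn (I b) (Wb b) ∧ I b ⊆ Set.Icc (Q.α n) (Q.α (n + 1)) ∧
      (Q.α n ∈ I b ∨ Q.α (n + 1) ∈ I b)) ∧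
    RepIso (V.restrict (periodize (Set.Icc (Q.α n) (Q.α (n + 1))))
      (periodize_shift _)) (dsum Wb)

end SRep
/-! ## Representations of (finite) quivers of type Ã_n

An `Ã_n` quiver has `N = n + 1` vertices, indexed by `ZMod N`, arranged
counterclockwise in a cycle, with exactly one arrow between the vertices `i` and
`i + 1` for each `i : ZMod N`; the orientation function `o` records its direction
(`o i = true` iff the arrow goes `i → i + 1`). -/

/-- A representation of the `Ã_{N-1}` quiver with orientation `o`. -/
structure CycRep (k : Type) [Field k] (N : ℕ) (o : ZMod N → Bool) where
  M : ZMod N → Type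
  [instAdd : ∀ i, AddCommGroup (M i)]
  [instMod : ∀ i, Module k (M i)]
  up : ∀ i : ZMod N, o i = true → (M i →ₗ[k] M (i + 1))
  down : ∀ i : ZMod N, o i = false → (M (i + 1) →ₗ[k] M i)

attribute [instance] CycRep.instAdd CycRep.instMod

namespace CycRep

variable {k : Type} [Field k] {N : ℕ} {o : ZMod N → Bool}

/-- Transport along an equality of vertices. -/
def castM (A : CycRep k N o) {i i' : ZMod N} (h : i = i') : A.M i ≃ₗ[k] A.M i' :=
  h ▸ LinearEquiv.refl k (A.M i)

/-- Isomorphism of representations of the `Ã_{N-1}` quiver. -/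
def Iso (A B : CycRep k N o) : Prop :=
  ∃ e : ∀ i, A.M i ≃ₗ[k] B.M i,
    (∀ (i : ZMod N) (h : o i = true) (v : A.M i),
        e (i + 1) (A.up i h v) = B.up i h (e i v)) ∧
    (∀ (i : ZMod N) (h : o i = false) (v : A.M (i + 1)),
        e i (A.down i h v) = B.down i h (e (i + 1) v))

def Nonzero (A : CycRep k N o) : Prop := ∃ (i : ZMod N) (v : A.M i), v ≠ 0

/-- Binary direct sum. -/
def prod (A B : CycRep k N o) : CycRep k N o where
  M i := A.M i × B.M i
  up i h := (A.up i h).prodMap (B.up i h)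
  down i h := (A.down i h).prodMap (B.down i h)

/-- Arbitrary direct sum. -/
def dsum {B : Type} (A : B → CycRep k N o) : CycRep k N o where
  M i := Π₀ b, (A b).M i
  up i h := DFinsupp.mapRange.linearMap fun b => (A b).up i h
  down i h := DFinsupp.mapRange.linearMap fun b => (A b).down i h

def Indecomposable (A : CycRep k N o) : Prop :=
  A.Nonzero ∧ ∀ B C : CycRep k N o, B.Nonzero → C.Nonzero → ¬ Iso A (B.prod C)

end CycRep

/-- The basis of the bar on the interval `{a, ..., b} ⊂ ℤ` at the vertex `i`:
integers in the interval congruent to `i` mod `N`. -/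
def cycIdx (N : ℕ) (a b : ℤ) (i : ZMod N) : Type :=
  {m : ℤ // m ∈ Set.Icc a b ∧ ((m : ZMod N) = i)}

variable (k : Type) [Field k]

open Classical in
/-- The bar's map along an arrow `i → i + 1` : `b_m ↦ b_{m+1}` when `m+1` stays in
the interval, and `0` otherwise. -/
def cycBarUp (N : ℕ) (a b : ℤ) (i : ZMod N) :
    (cycIdx N a b i →₀ k) →ₗ[k] (cycIdx N a b (i + 1) →₀ k) :=
  Finsupp.linearCombination k (fun m : cycIdx N a b i =>
    if hm : m.1 + 1 ∈ Set.Icc a b then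
      Finsupp.single (⟨m.1 + 1, hm, by push_cast; rw [m.2.2]⟩ : cycIdx N a b (i + 1)) (1 : k)
    else 0)

open Classical in
/-- The bar's map along an arrow `i + 1 → i` : `b_m ↦ b_{m-1}` when `m-1` stays in
the interval, and `0` otherwise. -/
def cycBarDown (N : ℕ) (a b : ℤ) (i : ZMod N) :
    (cycIdx N a b (i + 1) →₀ k) →ₗ[k] (cycIdx N a b i →₀ k) :=
  Finsupp.linearCombination k (fun m : cycIdx N a b (i + 1) =>
    if hm : m.1 - 1 ∈ Set.Icc a b then
      Finsupp.single (⟨m.1 - 1, hm, by push_cast; rw [m.2.2]; ring⟩ : cycIdx N a b i) (1 : k)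
    else 0)

variable {k}

namespace CycRep

variable {k : Type} [Field k] {N : ℕ} {o : ZMod N → Bool}

/-- `A` is (isomorphic to) the bar on the interval `{a, ..., b}` of `ℤ`. -/
def BarOn (a b : ℤ) (A : CycRep k N o) : Prop :=
  a ≤ b ∧ ∃ e : ∀ i, A.M i ≃ₗ[k] (cycIdx N a b i →₀ k),
    (∀ (i : ZMod N) (h : o i = true) (v : A.M i),
        e (i + 1) (A.up i h v) = cycBarUp k N a b i (e i v)) ∧
    (∀ (i : ZMod N) (h : o i = false) (v : A.M (i + 1)),
        e i (A.down i h v) = cycBarDown k N a b i (e (i + 1) v))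

def IsBar (A : CycRep k N o) : Prop := ∃ a b : ℤ, BarOn a b A

/-- One step `M i ≃ M (i+1)` of the monodromy of a representation all of whose
arrow maps are isomorphisms. -/
def stepC (A : CycRep k N o)
    (hup : ∀ (i : ZMod N) (h : o i = true), Function.Bijective (A.up i h))
    (hdown : ∀ (i : ZMod N) (h : o i = false), Function.Bijective (A.down i h))
    (i : ZMod N) : A.M i ≃ₗ[k] A.M (i + 1) :=
  if h : o i = true then LinearEquiv.ofBijective _ (hup i h)
  else (LinearEquiv.ofBijective _ (hdown i (by revert h; cases o i <;> simp))).symm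

def zigC (A : CycRep k N o)
    (hup : ∀ (i : ZMod N) (h : o i = true), Function.Bijective (A.up i h))
    (hdown : ∀ (i : ZMod N) (h : o i = false), Function.Bijective (A.down i h)) :
    (n : ℕ) → (A.M 0 ≃ₗ[k] A.M (n : ZMod N))
  | 0 => A.castM (by norm_num)
  | (n + 1) => ((A.zigC hup hdown n).trans (A.stepC hup hdown (n : ZMod N))).trans
      (A.castM (by push_cast; ring))

/-- The monodromy `M̂ : M 0 ≃ M 0` obtained by composing the arrow maps and their
inverses once around the cycle. -/
def monodromyC (A : CycRep k N o)
    (hup : ∀ (i : ZMod N) (h : o i = true), Function.Bijective (A.up i h))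
    (hdown : ∀ (i : ZMod N) (h : o i = false), Function.Bijective (A.down i h)) :
    A.M 0 ≃ₗ[k] A.M 0 :=
  (A.zigC hup hdown N).trans (A.castM (by simp))

/-- `A` is a Jordan cell representation of the `Ã_{N-1}` quiver. -/
structure IsJordan (A : CycRep k N o) : Prop where
  bijUp : ∀ (i : ZMod N) (h : o i = true), Function.Bijective (A.up i h)
  bijDown : ∀ (i : ZMod N) (h : o i = false), Function.Bijective (A.down i h)
  dim : ∃ d : ℕ, 1 ≤ d ∧ ∀ i, Module.finrank k (A.M i) = d
  indec : ∀ U W : Submodule k (A.M 0), IsCompl U W →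
      (∀ u ∈ U, A.monodromyC bijUp bijDown u ∈ U) →
      (∀ w ∈ W, A.monodromyC bijUp bijDown w ∈ W) → U = ⊥ ∨ W = ⊥

end CycRep
/-! ## Partitions of the circle and push downs -/

/-- A finite partition of the circle into (at least two) path-connected parts,
presented on the universal cover: `2π`-periodically ordered intervals `J j`
(`j : ℤ`), with `J (j + N)` the translate of `J j`; the parts of the circle are
the images of the `J j`, and `j` reduces mod `N` to the index of the part. -/
structure CircPartition (Q : AtR) where
  N : ℕ
  hN : 2 ≤ N
  J : ℤ → Set ℝ
  nonempty : ∀ j, (J j).Nonempty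
  ordconn : ∀ j, (J j).OrdConnected
  ordered : ∀ {j j' : ℤ}, j < j' → ∀ x ∈ J j, ∀ y ∈ J j', x < y
  cover : ∀ θ : ℝ, ∃ j, θ ∈ J j
  jper : ∀ (j : ℤ) (θ : ℝ), θ ∈ J j ↔ θ + 2 * Real.pi ∈ J (j + N)

namespace CircPartition

variable {Q : AtR} (C : CircPartition Q)

/-- The index of the part containing `θ`. -/
def partIdx (θ : ℝ) : ℤ := Classical.choose (C.cover θ)

lemma mem_partIdx (θ : ℝ) : θ ∈ C.J (C.partIdx θ) := Classical.choose_spec (C.cover θ)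

lemma partIdx_eq {θ : ℝ} {j : ℤ} (h : θ ∈ C.J j) : C.partIdx θ = j := by
  by_contra hne
  rcases lt_or_gt_of_ne hne with hlt | hlt
  · exact lt_irrefl θ (C.ordered hlt _ (C.mem_partIdx θ) _ h)
  · exact lt_irrefl θ (C.ordered hlt _ h _ (C.mem_partIdx θ))

lemma partIdx_shift (θ : ℝ) : C.partIdx (θ + 2 * Real.pi) = C.partIdx θ + C.N :=
  C.partIdx_eq ((C.jper _ _).mp (C.mem_partIdx θ))

/-- The index of the part containing `θ`, as a vertex of the auxiliary quiver. -/
def partZ (θ : ℝ) : ZMod C.N := ((C.partIdx θ : ℤ) : ZMod C.N)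

lemma partZ_shift (θ : ℝ) : C.partZ (θ + 2 * Real.pi) = C.partZ θ := by
  unfold partZ
  rw [C.partIdx_shift θ]
  push_cast
  simp

lemma partZ_congr {θ φ : ℝ} (hp : C.partIdx θ = C.partIdx φ) : C.partZ θ = C.partZ φ := by
  unfold partZ; rw [hp]

lemma partZ_succ {θ φ : ℝ} (hp : C.partIdx φ = C.partIdx θ + 1) :
    C.partZ θ + 1 = C.partZ φ := by
  unfold partZ; rw [hp]; push_cast; ring

lemma partZ_pred {θ φ : ℝ} (hp : C.partIdx θ = C.partIdx φ + 1) :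
    C.partZ θ = C.partZ φ + 1 := by
  unfold partZ; rw [hp]; push_cast; ring

/-- There is an arrow from the part of `J j` to the part of `J (j+1)` in the
auxiliary quiver (their union being automatically path-connected). -/
def dirUp (j : ℤ) : Prop := ∃ x ∈ C.J j, ∃ y ∈ C.J (j + 1), Q.covRel x y

/-- There is an arrow from the part of `J (j+1)` to the part of `J j`. -/
def dirDown (j : ℤ) : Prop := ∃ x ∈ C.J (j + 1), ∃ y ∈ C.J j, Q.covRel x y

end CircPartition

namespace SRep

variable {k : Type} [Field k] {Q : AtR}

/-- `U` is the push down to the continuous quiver of the representation `A` of the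
auxiliary `Ã_{N-1}` quiver of the partition `C` (with orientation `o`):
`U` is constant equal to `A.M i` on the `i`-th part, with identity maps within a
part, the maps of `A` across boundaries of parts, and the evident periodicity. -/
def PushdownOf (C : CircPartition Q) (o : ZMod C.N → Bool) (A : CycRep k C.N o)
    (U : SRep k Q) : Prop :=
  ∃ e : ∀ θ, U.obj θ ≃ₗ[k] A.M (C.partZ θ),
    (∀ {θ φ : ℝ} (h : Q.covRel θ φ) (hp : C.partIdx θ = C.partIdx φ) (v : U.obj θ),
        e φ (U.map h v) = A.castM (C.partZ_congr hp) (e θ v)) ∧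
    (∀ {θ φ : ℝ} (h : Q.covRel θ φ) (hp : C.partIdx φ = C.partIdx θ + 1)
        (ht : o (C.partZ θ) = true) (v : U.obj θ),
        e φ (U.map h v) = A.castM (C.partZ_succ hp) (A.up (C.partZ θ) ht (e θ v))) ∧
    (∀ {θ φ : ℝ} (h : Q.covRel θ φ) (hp : C.partIdx θ = C.partIdx φ + 1)
        (hf : o (C.partZ φ) = false) (v : U.obj θ),
        e φ (U.map h v) = A.down (C.partZ φ) hf (A.castM (C.partZ_pred hp) (e θ v))) ∧
    (∀ (θ : ℝ) (v : U.obj (θ + 2 * Real.pi)),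
        e θ (U.per θ v) = A.castM (C.partZ_shift θ) (e (θ + 2 * Real.pi) v))

/-- Transport between the values of `V` at representative points whose indices
agree modulo the period, using the periodicity isomorphism if needed. -/
def ptBridge (V : SRep k Q) (pt : ℤ → ℝ) (Nn : ℕ)
    (hper : ∀ j : ℤ, pt (j + (Nn : ℤ)) = pt j + 2 * Real.pi) {a b : ℤ}
    (h : a = b ∨ a = b + (Nn : ℤ)) : V.obj (pt a) ≃ₗ[k] V.obj (pt b) :=
  if he : a = b then V.castO (congrArg pt he)
  else (V.castO (show pt a = pt b + 2 * Real.pi by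
      rw [h.resolve_left he]; exact hper b)).trans (V.per (pt b))

lemma zmod_val_succ {N : ℕ} (hN : 2 ≤ N) (i : ZMod N) :
    (((i + 1 : ZMod N).val : ℤ) = (i.val : ℤ) + 1) ∨
      ((i.val : ℤ) + 1 = ((i + 1 : ZMod N).val : ℤ) + (N : ℤ)) := by
  haveI : NeZero N := ⟨by omega⟩
  haveI : Fact (1 < N) := ⟨by omega⟩
  have hval : (i + 1 : ZMod N).val = (i.val + 1) % N := by
    rw [ZMod.val_add, ZMod.val_one]
  have hlt : i.val < N := ZMod.val_lt i
  rcases Nat.lt_or_ge (i.val + 1) N with h | h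
  · left; rw [hval, Nat.mod_eq_of_lt h]; push_cast; ring
  · right
    have he : i.val + 1 = N := by omega
    rw [hval, he, Nat.mod_self]
    push_cast
    omega

/-- The auxiliary representation `M_V` of the auxiliary quiver of a partition `C`,
given by the values of `V` at the representative points `pt`. -/
def auxOfPoints (V : SRep k Q) (C : CircPartition Q) (o : ZMod C.N → Bool) (pt : ℤ → ℝ)
    (hper : ∀ j : ℤ, pt (j + (C.N : ℤ)) = pt j + 2 * Real.pi)
    (hup : ∀ (i : ZMod C.N), o i = true → Q.covRel (pt (i.val : ℤ)) (pt ((i.val : ℤ) + 1)))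
    (hdown : ∀ (i : ZMod C.N), o i = false → Q.covRel (pt ((i.val : ℤ) + 1)) (pt (i.val : ℤ))) :
    CycRep k C.N o where
  M i := V.obj (pt (i.val : ℤ))
  up i h := (V.ptBridge pt C.N hper
      ((zmod_val_succ C.hN i).imp Eq.symm id)).toLinearMap ∘ₗ V.map (hup i h)
  down i h := V.map (hdown i h) ∘ₗ (V.ptBridge pt C.N hper
      ((zmod_val_succ C.hN i).imp Eq.symm id)).symm.toLinearMap

/-- `U` is the refinement of `V` with respect to the partition `C` and the choice
of representative points `pt`: `U(θ) = V(pt (partIdx θ))`, with structure maps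
induced by those of `V` between representative points. -/
def RefinementOf (V : SRep k Q) (C : CircPartition Q) (pt : ℤ → ℝ)
    (hper : ∀ j : ℤ, pt (j + (C.N : ℤ)) = pt j + 2 * Real.pi) (U : SRep k Q) : Prop :=
  (∀ j, pt j ∈ C.J j) ∧
  ∃ e : ∀ θ, U.obj θ ≃ₗ[k] V.obj (pt (C.partIdx θ)),
    (∀ {θ φ : ℝ} (h : Q.covRel θ φ) (hp : C.partIdx θ = C.partIdx φ) (v : U.obj θ),
        e φ (U.map h v) = V.castO (congrArg pt hp) (e θ v)) ∧
    (∀ {θ φ : ℝ} (h : Q.covRel θ φ)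
        (hc : Q.covRel (pt (C.partIdx θ)) (pt (C.partIdx φ))) (v : U.obj θ),
        e φ (U.map h v) = V.map hc (e θ v)) ∧
    (∀ (θ : ℝ) (v : U.obj (θ + 2 * Real.pi)),
        e θ (U.per θ v) = V.per (pt (C.partIdx θ))
          ((V.castO (show pt (C.partIdx (θ + 2 * Real.pi)) = pt (C.partIdx θ) + 2 * Real.pi by
            rw [C.partIdx_shift θ]; exact hper _)) (e (θ + 2 * Real.pi) v)))

end SRep
/-! ## The endomorphism ring -/

namespace SRep

variable {k : Type} [Field k] {Q : AtR}

/-- The endomorphism ring of a representation: the subring of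
`∀ θ, End (V θ)` consisting of the natural families (with multiplication given by
pointwise composition). -/
def endSubring (V : SRep k Q) : Subring (∀ θ, Module.End k (V.obj θ)) where
  carrier := {f | IsHomFam V V f}
  mul_mem' := by
    rintro a b ⟨ha1, ha2⟩ ⟨hb1, hb2⟩
    constructor
    · intro θ φ h v
      simp only [Pi.mul_apply, Module.End.mul_apply]
      rw [hb1 h v, ha1 h]
    · intro θ v
      simp only [Pi.mul_apply, Module.End.mul_apply]
      rw [hb2 θ v, ha2 θ]
  one_mem' := by
    constructor
    · intro θ φ h v; simp
    · intro θ v; simp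
  add_mem' := by
    rintro a b ⟨ha1, ha2⟩ ⟨hb1, hb2⟩
    constructor
    · intro θ φ h v
      simp only [Pi.add_apply, LinearMap.add_apply]
      rw [ha1 h v, hb1 h v, map_add]
    · intro θ v
      simp only [Pi.add_apply, LinearMap.add_apply]
      rw [ha2 θ v, hb2 θ v, map_add]
  zero_mem' := by
    constructor
    · intro θ φ h v; simp
    · intro θ v; simp
  neg_mem' := by
    rintro a ⟨ha1, ha2⟩
    constructor
    · intro θ φ h v
      simp only [Pi.neg_apply, LinearMap.neg_apply]
      rw [ha1 h v, map_neg]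
    · intro θ v
      simp only [Pi.neg_apply, LinearMap.neg_apply]
      rw [ha2 θ v, map_neg]

end SRep

/-! ## Auxiliary development -/

namespace AtR

variable (Q : AtR)

lemma even_periodN : Even (Q.periodN : ℤ) := by
  unfold periodN; split_ifs
  · exact ⟨1, rfl⟩
  · exact ⟨(Q.m : ℤ), by push_cast; ring⟩

lemma α_addP (j : ℤ) : Q.α (j + (Q.periodN : ℤ)) = Q.α j + 2 * Real.pi := by
  by_cases hm : Q.m = 0
  · have hp : (Q.periodN : ℤ) = 2 := by unfold periodN; rw [if_pos hm]; rfl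
    rw [hp, Q.cyc hm, Q.cyc hm]; push_cast; ring
  · have hp : (Q.periodN : ℤ) = 2 * Q.m := by unfold periodN; rw [if_neg hm]; push_cast; ring
    rw [hp]
    have h := Q.per hm j
    exact_mod_cast h

lemma α_mul_P (n : ℤ) : Q.α (n * (Q.periodN : ℤ)) = Q.α 0 + n * (2 * Real.pi) := by
  induction n using Int.induction_on with
  | zero => simp
  | succ i ih =>
      have : ((i : ℤ) + 1) * (Q.periodN : ℤ) = (i : ℤ) * Q.periodN + Q.periodN := by ring
      rw [this, Q.α_addP, ih]; push_cast; ring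
  | pred i ih =>
      have h := Q.α_addP ((-(i : ℤ) - 1) * (Q.periodN : ℤ))
      have he : (-(i : ℤ) - 1) * (Q.periodN : ℤ) + Q.periodN = (-(i:ℤ)) * Q.periodN := by ring
      rw [he, ih] at h
      push_cast at h ⊢
      linarith

lemma exists_idx (θ : ℝ) :
    ∃ j : ℤ, Q.α j ≤ θ ∧ ∀ j' : ℤ, Q.α j' ≤ θ → j' ≤ j := by
  have hP : (0:ℤ) < (Q.periodN : ℤ) := by exact_mod_cast Q.periodN_pos
  have h2pi : (0:ℝ) < 2 * Real.pi := by positivity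
  obtain ⟨n, hn⟩ := exists_int_lt ((θ - Q.α 0) / (2 * Real.pi))
  have hlow : Q.α (n * Q.periodN) ≤ θ := by
    rw [Q.α_mul_P]
    have h1 : (n:ℝ) * (2*Real.pi) < θ - Q.α 0 := by
      have := mul_lt_mul_of_pos_right hn h2pi
      rwa [div_mul_cancel₀] at this
      positivity
    linarith
  obtain ⟨nb, hnb⟩ := exists_int_gt ((θ - Q.α 0) / (2 * Real.pi))
  have hup : θ < Q.α (nb * Q.periodN) := by
    rw [Q.α_mul_P]
    have : θ - Q.α 0 < (nb:ℝ) * (2*Real.pi) := by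
      have := mul_lt_mul_of_pos_right hnb h2pi
      rwa [div_mul_cancel₀] at this
      positivity
    linarith
  obtain ⟨j, hj1, hj2⟩ := Int.exists_greatest_of_bdd
    (P := fun j => Q.α j ≤ θ)
    ⟨nb * Q.periodN, fun z hz => by
      by_contra hc
      push_neg at hc
      exact absurd (Q.mono hc) (not_lt.mpr (le_trans hz (le_of_lt hup)))⟩
    ⟨n * Q.periodN, hlow⟩
  exact ⟨j, hj1, hj2⟩

/-- The index of the arc containing `θ`. -/
def idx (θ : ℝ) : ℤ := (Q.exists_idx θ).choose

lemma idx_le (θ : ℝ) : Q.α (Q.idx θ) ≤ θ := (Q.exists_idx θ).choose_spec.1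

lemma le_idx (θ : ℝ) {j : ℤ} (h : Q.α j ≤ θ) : j ≤ Q.idx θ :=
  (Q.exists_idx θ).choose_spec.2 j h

lemma lt_idx_succ (θ : ℝ) : θ < Q.α (Q.idx θ + 1) := by
  by_contra h
  push_neg at h
  exact absurd (Q.le_idx θ h) (by omega)

lemma mem_arc (θ : ℝ) : θ ∈ Set.Icc (Q.α (Q.idx θ)) (Q.α (Q.idx θ + 1)) :=
  ⟨Q.idx_le θ, le_of_lt (Q.lt_idx_succ θ)⟩

lemma idx_unique {θ : ℝ} {j : ℤ} (h1 : Q.α j ≤ θ) (h2 : θ < Q.α (j + 1)) :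
    Q.idx θ = j := by
  have ha := Q.le_idx θ h1
  have hb : Q.idx θ ≤ j := by
    by_contra hc
    push_neg at hc
    exact absurd (le_trans (Q.mono.monotone (by omega : j + 1 ≤ Q.idx θ)) (Q.idx_le θ))
      (not_le.mpr h2)
  omega

lemma idx_α (j : ℤ) : Q.idx (Q.α j) = j :=
  Q.idx_unique le_rfl (Q.mono (by omega))

lemma idx_shift (θ : ℝ) : Q.idx (θ + 2 * Real.pi) = Q.idx θ + Q.periodN := by
  refine Q.idx_unique ?_ ?_
  · rw [Q.α_addP]; linarith [Q.idx_le θ]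
  · rw [show Q.idx θ + (Q.periodN:ℤ) + 1 = Q.idx θ + 1 + Q.periodN from by ring, Q.α_addP]
    linarith [Q.lt_idx_succ θ]

lemma covRel_of_le (hm : Q.m = 0) {θ φ : ℝ} (h : θ ≤ φ) : Q.covRel θ φ := by
  unfold covRel; rw [if_pos hm]; exact h

lemma le_of_covRel (hm : Q.m = 0) {θ φ : ℝ} (h : Q.covRel θ φ) : θ ≤ φ := by
  unfold covRel at h; rwa [if_pos hm] at h

lemma covRel_arc_down (hm : Q.m ≠ 0) {j : ℤ} (he : Even j) {θ φ : ℝ}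
    (hθ : θ ∈ Set.Icc (Q.α j) (Q.α (j+1))) (hφ : φ ∈ Set.Icc (Q.α j) (Q.α (j+1)))
    (hle : φ ≤ θ) : Q.covRel θ φ := by
  unfold covRel; rw [if_neg hm]
  exact ⟨j, hθ, hφ, Or.inl ⟨he, hle⟩⟩

lemma covRel_arc_up (hm : Q.m ≠ 0) {j : ℤ} (ho : ¬ Even j) {θ φ : ℝ}
    (hθ : θ ∈ Set.Icc (Q.α j) (Q.α (j+1))) (hφ : φ ∈ Set.Icc (Q.α j) (Q.α (j+1)))
    (hle : θ ≤ φ) : Q.covRel θ φ := by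
  unfold covRel; rw [if_neg hm]
  exact ⟨j, hθ, hφ, Or.inr ⟨ho, hle⟩⟩

lemma covRel_shift {θ φ : ℝ} (h : Q.covRel θ φ) :
    Q.covRel (θ + 2 * Real.pi) (φ + 2 * Real.pi) := by
  unfold covRel at h ⊢
  by_cases hm : Q.m = 0
  · rw [if_pos hm] at h ⊢; linarith
  · rw [if_neg hm] at h ⊢
    obtain ⟨j, hθ, hφ, hor⟩ := h
    have hP : ∀ i : ℤ, Q.α (i + 2 * Q.m) = Q.α i + 2 * Real.pi := fun i => by
      have := Q.per hm i; exact_mod_cast this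
    refine ⟨j + 2 * Q.m, ?_, ?_, ?_⟩
    · rw [hP j, show j + 2*(Q.m:ℤ) + 1 = (j+1) + 2*Q.m from by ring, hP (j+1)]
      exact ⟨by linarith [hθ.1], by linarith [hθ.2]⟩
    · rw [hP j, show j + 2*(Q.m:ℤ) + 1 = (j+1) + 2*Q.m from by ring, hP (j+1)]
      exact ⟨by linarith [hφ.1], by linarith [hφ.2]⟩
    · have hpar : Even (j + 2 * (Q.m:ℤ)) ↔ Even j := by
        constructor
        · intro h'; rcases h' with ⟨c, hc⟩; exact ⟨c - Q.m, by omega⟩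
        · intro h'; rcases h' with ⟨c, hc⟩; exact ⟨c + Q.m, by omega⟩
      rcases hor with ⟨he, hle⟩ | ⟨ho, hle⟩
      · exact Or.inl ⟨hpar.mpr he, by linarith⟩
      · exact Or.inr ⟨fun hc => ho (hpar.mp hc), by linarith⟩

end AtR

namespace SRep

variable {k : Type} [Field k] {Q : AtR}

lemma castO_castO (V : SRep k Q) {a b c : ℝ} (h1 : a = b) (h2 : b = c) (x : V.obj a) :
    V.castO h2 (V.castO h1 x) = V.castO (h1.trans h2) x := by
  subst h1; subst h2; rfl

lemma castO_self (V : SRep k Q) {a : ℝ} (h : a = a) (x : V.obj a) : V.castO h x = x := rfl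

lemma castO_symm_apply (V : SRep k Q) {a b : ℝ} (h : a = b) (x : V.obj b) :
    (V.castO h).symm x = V.castO h.symm x := by subst h; rfl

lemma map_castO (V : SRep k Q) {a b a' b' : ℝ} (ha : a = a') (hb : b = b')
    (h : Q.covRel a b) (h' : Q.covRel a' b') (x : V.obj a) :
    V.map h' (V.castO ha x) = V.castO hb (V.map h x) := by
  subst ha; subst hb; rfl

lemma map_eqpoints (V : SRep k Q) {a b : ℝ} (hab : a = b) (h : Q.covRel a b) (x : V.obj a) :
    V.map h x = V.castO hab x := by
  subst hab; rw [V.map_id a h]; rfl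

lemma per_castO (V : SRep k Q) {a b : ℝ} (hab : a = b)
    (h2 : a + 2 * Real.pi = b + 2 * Real.pi) (x : V.obj (a + 2 * Real.pi)) :
    V.per b (V.castO h2 x) = V.castO hab (V.per a x) := by
  subst hab; rfl

section Forward

variable {V W : SRep k Q} (e : ∀ θ, V.obj θ ≃ₗ[k] W.obj θ)

lemma e_castO {a b : ℝ} (h : a = b) (x : V.obj a) :
    e b (V.castO h x) = W.castO h (e a x) := by subst h; rfl

lemma e_step
    (hmap : ∀ {θ φ : ℝ} (h : Q.covRel θ φ) (v : V.obj θ), e φ (V.map h v) = W.map h (e θ v))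
    (hv : ∀ ⦃θ φ : ℝ⦄ (h : Q.covRel θ φ), Function.Bijective (V.map h))
    (hw : ∀ ⦃θ φ : ℝ⦄ (h : Q.covRel θ φ), Function.Bijective (W.map h))
    (j : ℤ) (x : V.obj (Q.α j)) :
    e (Q.α (j + 1)) (V.step hv j x) = W.step hw j (e (Q.α j) x) := by
  unfold SRep.step
  by_cases hc : Q.m = 0 ∨ ¬ Even j
  · rw [dif_pos hc, dif_pos hc]
    simp only [LinearEquiv.ofBijective_apply]
    exact hmap _ x
  · rw [dif_neg hc, dif_neg hc]
    rw [LinearEquiv.eq_symm_apply]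
    simp only [LinearEquiv.ofBijective_apply]
    rw [← hmap _ ((LinearEquiv.ofBijective _ (hv _)).symm x)]
    congr 1
    exact (LinearEquiv.ofBijective _ (hv _)).apply_symm_apply x

lemma e_zig
    (hmap : ∀ {θ φ : ℝ} (h : Q.covRel θ φ) (v : V.obj θ), e φ (V.map h v) = W.map h (e θ v))
    (hv : ∀ ⦃θ φ : ℝ⦄ (h : Q.covRel θ φ), Function.Bijective (V.map h))
    (hw : ∀ ⦃θ φ : ℝ⦄ (h : Q.covRel θ φ), Function.Bijective (W.map h))
    (n : ℕ) (x : V.obj (Q.α 0)) :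
    e (Q.α (n : ℤ)) (V.zig hv n x) = W.zig hw n (e (Q.α 0) x) := by
  induction n with
  | zero => exact e_castO e _ x
  | succ n ih =>
      simp only [SRep.zig, LinearEquiv.trans_apply]
      rw [e_castO e, e_step e hmap hv hw, ih]

lemma e_monodromy
    (hmap : ∀ {θ φ : ℝ} (h : Q.covRel θ φ) (v : V.obj θ), e φ (V.map h v) = W.map h (e θ v))
    (hv : ∀ ⦃θ φ : ℝ⦄ (h : Q.covRel θ φ), Function.Bijective (V.map h))
    (hw : ∀ ⦃θ φ : ℝ⦄ (h : Q.covRel θ φ), Function.Bijective (W.map h))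
    (hper : ∀ (θ : ℝ) (v : V.obj (θ + 2 * Real.pi)),
        e θ (V.per θ v) = W.per θ (e (θ + 2 * Real.pi) v))
    (x : V.obj (Q.α 0)) :
    e (Q.α 0) (V.monodromy hv x) = W.monodromy hw (e (Q.α 0) x) := by
  simp only [SRep.monodromy, LinearEquiv.trans_apply]
  rw [hper, e_castO e, e_zig e hmap hv hw]

end Forward

lemma even_add_P (j : ℤ) : Even (j + (Q.periodN : ℤ)) ↔ Even j := by
  rw [Int.even_add]
  simp [Q.even_periodN]

lemma step_cond_iff (j : ℤ) :
    (Q.m = 0 ∨ ¬ Even j) ↔ (Q.m = 0 ∨ ¬ Even (j + (Q.periodN : ℤ))) := by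
  rw [even_add_P]

lemma step_per (X : SRep k Q)
    (hx : ∀ ⦃θ φ : ℝ⦄ (h : Q.covRel θ φ), Function.Bijective (X.map h))
    (j : ℤ) (h₁ : Q.α (j + (Q.periodN : ℤ) + 1) = Q.α (j + 1) + 2 * Real.pi)
    (x : X.obj (Q.α (j + (Q.periodN : ℤ)))) :
    X.step hx j (X.per (Q.α j) (X.castO (Q.α_addP j) x))
      = X.per (Q.α (j + 1)) (X.castO h₁ (X.step hx (j + (Q.periodN : ℤ)) x)) := by
  unfold SRep.step
  by_cases hc : Q.m = 0 ∨ ¬ Even j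
  · rw [dif_pos hc, dif_pos ((step_cond_iff j).mp hc)]
    simp only [LinearEquiv.ofBijective_apply]
    have hup : Q.covRel (Q.α j) (Q.α (j + 1)) := AtR.covRel_up j hc
    have hs : Q.covRel (Q.α j + 2 * Real.pi) (Q.α (j + 1) + 2 * Real.pi) :=
      Q.covRel_shift hup
    rw [X.per_map_apply hup hs]
    congr 1
    exact X.map_castO (Q.α_addP j) h₁ (AtR.covRel_up (j + Q.periodN)
      ((step_cond_iff j).mp hc)) hs x
  · rw [dif_neg hc, dif_neg (fun h => hc ((step_cond_iff j).mpr h))]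
    rw [LinearEquiv.symm_apply_eq]
    simp only [LinearEquiv.ofBijective_apply]
    push_neg at hc
    have hdown : Q.covRel (Q.α (j + 1)) (Q.α j) := AtR.covRel_down j hc.1 hc.2
    have hdown2 : Q.covRel (Q.α (j + Q.periodN + 1)) (Q.α (j + Q.periodN)) :=
      AtR.covRel_down (j + Q.periodN) hc.1 ((even_add_P j).mpr hc.2)
    have hs : Q.covRel (Q.α (j + 1) + 2 * Real.pi) (Q.α j + 2 * Real.pi) :=
      Q.covRel_shift hdown
    rw [X.per_map_apply hdown hs]
    set y := (LinearEquiv.ofBijective _ (hx hdown2)).symm x with hy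
    have h2 : X.map hs (X.castO h₁ y) = X.castO (Q.α_addP j) (X.map hdown2 y) :=
      X.map_castO h₁ (Q.α_addP j) hdown2 hs y
    rw [h2]
    exact congrArg (X.per (Q.α j)) (congrArg (X.castO (Q.α_addP j))
      ((LinearEquiv.ofBijective _ (hx hdown2)).apply_symm_apply x).symm)

variable (V W : SRep k Q)
  (hv : ∀ ⦃θ φ : ℝ⦄ (h : Q.covRel θ φ), Function.Bijective (V.map h))
  (hw : ∀ ⦃θ φ : ℝ⦄ (h : Q.covRel θ φ), Function.Bijective (W.map h))
  (A : V.obj (Q.α 0) ≃ₗ[k] W.obj (Q.α 0))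

/-- The family at nonnegative grid points. -/
def Bpos : (n : ℕ) → (V.obj (Q.α (Int.ofNat n)) ≃ₗ[k] W.obj (Q.α (Int.ofNat n)))
  | 0 => A
  | n+1 => ((V.step hv (Int.ofNat n)).symm.trans (Bpos n)).trans (W.step hw (Int.ofNat n))

/-- The family at negative grid points. -/
def Bneg : (n : ℕ) → (V.obj (Q.α (Int.negSucc n)) ≃ₗ[k] W.obj (Q.α (Int.negSucc n)))
  | 0 => ((V.step hv (Int.negSucc 0)).trans A).trans (W.step hw (Int.negSucc 0)).symm
  | n+1 => ((V.step hv (Int.negSucc (n+1))).trans (Bneg n)).trans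
      (W.step hw (Int.negSucc (n+1))).symm

/-- The conjugating family at all grid points. -/
def Bfam : ∀ j : ℤ, V.obj (Q.α j) ≃ₗ[k] W.obj (Q.α j)
  | Int.ofNat n => Bpos V W hv hw A n
  | Int.negSucc n => Bneg V W hv hw A n

lemma Bfam_zero (x : V.obj (Q.α 0)) : Bfam V W hv hw A 0 x = A x := rfl

lemma Bfam_step (j : ℤ) (x : V.obj (Q.α j)) :
    Bfam V W hv hw A (j + 1) (V.step hv j x) = W.step hw j (Bfam V W hv hw A j x) := by
  cases j with
  | ofNat n =>
      show Bpos V W hv hw A (n+1) (V.step hv (Int.ofNat n) x)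
        = W.step hw (Int.ofNat n) (Bpos V W hv hw A n x)
      simp only [Bpos, LinearEquiv.trans_apply]
      exact congrArg _ (congrArg _ ((V.step hv (Int.ofNat n)).symm_apply_apply x))
  | negSucc n =>
      cases n with
      | zero =>
          show Bpos V W hv hw A 0 (V.step hv (Int.negSucc 0) x)
            = W.step hw (Int.negSucc 0) (Bneg V W hv hw A 0 x)
          simp only [Bpos, Bneg, LinearEquiv.trans_apply]
          exact ((W.step hw (Int.negSucc 0)).apply_symm_apply _).symm
      | succ n =>
          show Bneg V W hv hw A n (V.step hv (Int.negSucc (n+1)) x)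
            = W.step hw (Int.negSucc (n+1)) (Bneg V W hv hw A (n+1) x)
          simp only [Bneg, LinearEquiv.trans_apply]
          exact ((W.step hw (Int.negSucc (n+1))).apply_symm_apply _).symm

lemma Bfam_cast {a b : ℤ} (hab : a = b) (hr : Q.α a = Q.α b) (x : V.obj (Q.α a)) :
    Bfam V W hv hw A b (V.castO hr x) = W.castO hr (Bfam V W hv hw A a x) := by
  subst hab; rfl

lemma Bfam_zig (n : ℕ) (v : V.obj (Q.α 0)) :
    Bfam V W hv hw A ((n : ℕ) : ℤ) (V.zig hv n v) = W.zig hw n (A v) := by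
  induction n with
  | zero => rfl
  | succ n ih =>
      simp only [SRep.zig, LinearEquiv.trans_apply]
      rw [Bfam_cast V W hv hw A (by push_cast; ring : ((n:ℤ) + 1 = ((n+1 : ℕ) : ℤ)))]
      rw [Bfam_step, ih]

lemma Bfam_per
    (hA : ∀ v, A (V.monodromy hv v) = W.monodromy hw (A v)) (j : ℤ)
    (x : V.obj (Q.α (j + (Q.periodN : ℤ)))) :
    Bfam V W hv hw A j (V.per (Q.α j) (V.castO (Q.α_addP j) x))
      = W.per (Q.α j) (W.castO (Q.α_addP j) (Bfam V W hv hw A (j + (Q.periodN : ℤ)) x)) := by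
  induction j using Int.induction_on with
  | zero =>
      have hr : Q.α ((0:ℤ) + (Q.periodN : ℤ)) = Q.α ((Q.periodN : ℕ) : ℤ) :=
        congrArg Q.α (zero_add _)
      set v := (V.zig hv Q.periodN).symm (V.castO hr x) with hvdef
      have hx' : V.castO hr x = V.zig hv Q.periodN v := by
        rw [hvdef, LinearEquiv.apply_symm_apply]
      have e1 : V.castO (Q.α_addP 0) x = V.castO Q.α_periodN (V.castO hr x) := by
        rw [V.castO_castO]
      rw [e1, hx']
      have e4 : Bfam V W hv hw A 0
            (V.per (Q.α 0) (V.castO Q.α_periodN (V.zig hv Q.periodN v)))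
          = A (V.monodromy hv v) := rfl
      rw [e4, hA]
      have e5 : W.monodromy hw (A v)
          = W.per (Q.α 0) (W.castO Q.α_periodN (W.zig hw Q.periodN (A v))) := rfl
      rw [e5, ← Bfam_zig V W hv hw A Q.periodN v, ← hx',
        Bfam_cast V W hv hw A (zero_add _) hr x, W.castO_castO]
  | succ i ih =>
      have hc : Q.α ((i:ℤ) + (Q.periodN:ℤ) + 1) = Q.α ((i:ℤ) + 1 + (Q.periodN:ℤ)) :=
        congrArg Q.α (by ring)
      have h₁ : Q.α ((i:ℤ) + (Q.periodN : ℤ) + 1) = Q.α ((i:ℤ) + 1) + 2 * Real.pi := by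
        rw [hc, Q.α_addP]
      set x₁ := V.castO hc.symm x with hx₁
      set x₀ := (V.step hv ((i:ℤ) + (Q.periodN:ℤ))).symm x₁ with hx₀
      have hx : x = V.castO hc (V.step hv ((i:ℤ) + (Q.periodN:ℤ)) x₀) := by
        rw [hx₀, LinearEquiv.apply_symm_apply, hx₁, V.castO_castO]
        exact (V.castO_self _ x).symm
      rw [hx, V.castO_castO]
      have e2 : V.castO (hc.trans (Q.α_addP ((i:ℤ)+1)))
            (V.step hv ((i:ℤ) + (Q.periodN:ℤ)) x₀)
          = V.castO h₁ (V.step hv ((i:ℤ) + (Q.periodN:ℤ)) x₀) := rfl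
      rw [e2, ← V.step_per hv (i:ℤ) h₁ x₀, Bfam_step, ih, W.step_per hw (i:ℤ) h₁]
      rw [Bfam_cast V W hv hw A
        (by ring : (i:ℤ) + (Q.periodN:ℤ) + 1 = (i:ℤ) + 1 + (Q.periodN:ℤ)) hc,
        Bfam_step, W.castO_castO]
  | pred i ih =>
      have h₁ : Q.α (-(i:ℤ) - 1 + (Q.periodN : ℤ) + 1)
          = Q.α (-(i:ℤ) - 1 + 1) + 2 * Real.pi := by
        rw [show -(i:ℤ) - 1 + (Q.periodN:ℤ) + 1 = (-(i:ℤ) - 1 + 1) + (Q.periodN:ℤ) from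
          by ring, Q.α_addP]
      have hab : Q.α (-(i:ℤ) - 1 + 1) = Q.α (-(i:ℤ)) := congrArg Q.α (by ring)
      have hab2 : Q.α (-(i:ℤ) - 1 + 1) + 2 * Real.pi = Q.α (-(i:ℤ)) + 2 * Real.pi := by
        rw [hab]
      have hc' : Q.α (-(i:ℤ) - 1 + (Q.periodN:ℤ) + 1) = Q.α (-(i:ℤ) + (Q.periodN:ℤ)) :=
        congrArg Q.α (by ring)
      apply (W.step hw (-(i:ℤ) - 1)).injective
      rw [← Bfam_step, V.step_per hv (-(i:ℤ) - 1) h₁ x]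
      have hper1 : ∀ u : V.obj (Q.α (-(i:ℤ) - 1 + 1) + 2 * Real.pi),
          V.per (Q.α (-(i:ℤ) - 1 + 1)) u
            = V.castO hab.symm (V.per (Q.α (-(i:ℤ))) (V.castO hab2 u)) := by
        intro u
        rw [V.per_castO hab hab2 u, V.castO_castO, V.castO_self]
      rw [hper1, Bfam_cast V W hv hw A (by ring : -(i:ℤ) = -(i:ℤ) - 1 + 1) hab.symm]
      have e3 : V.castO hab2 (V.castO h₁ (V.step hv (-(i:ℤ) - 1 + (Q.periodN:ℤ)) x))
          = V.castO (Q.α_addP (-(i:ℤ)))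
              (V.castO hc' (V.step hv (-(i:ℤ) - 1 + (Q.periodN:ℤ)) x)) := by
        rw [V.castO_castO, V.castO_castO]
      rw [e3, ih, Bfam_cast V W hv hw A
        (by ring : -(i:ℤ) - 1 + (Q.periodN:ℤ) + 1 = -(i:ℤ) + (Q.periodN:ℤ)) hc', Bfam_step,
        W.step_per hw (-(i:ℤ) - 1) h₁]
      have hper2 : ∀ u : W.obj (Q.α (-(i:ℤ) - 1 + 1) + 2 * Real.pi),
          W.per (Q.α (-(i:ℤ) - 1 + 1)) u
            = W.castO hab.symm (W.per (Q.α (-(i:ℤ))) (W.castO hab2 u)) := by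
        intro u
        rw [W.per_castO hab hab2 u, W.castO_castO, W.castO_self]
      rw [hper2]
      have e6 : W.castO hab2 (W.castO h₁ (W.step hw (-(i:ℤ) - 1 + (Q.periodN:ℤ))
            (Bfam V W hv hw A (-(i:ℤ) - 1 + (Q.periodN:ℤ)) x)))
          = W.castO (Q.α_addP (-(i:ℤ))) (W.castO hc'
              (W.step hw (-(i:ℤ) - 1 + (Q.periodN:ℤ))
                (Bfam V W hv hw A (-(i:ℤ) - 1 + (Q.periodN:ℤ)) x))) := by
        rw [W.castO_castO, W.castO_castO]
      rw [e6]

end SRep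

namespace SRep

variable {k : Type} [Field k] {Q : AtR}

lemma link_cov_up (θ : ℝ) (h : Q.m = 0 ∨ ¬ Even (Q.idx θ)) :
    Q.covRel (Q.α (Q.idx θ)) θ := by
  by_cases hm : Q.m = 0
  · exact Q.covRel_of_le hm (Q.idx_le θ)
  · exact Q.covRel_arc_up hm (h.resolve_left hm)
      (Set.left_mem_Icc.mpr (Q.mono.monotone (by omega))) (Q.mem_arc θ) (Q.idx_le θ)

lemma link_cov_down (θ : ℝ) (hm : Q.m ≠ 0) (he : Even (Q.idx θ)) :
    Q.covRel θ (Q.α (Q.idx θ)) :=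
  Q.covRel_arc_down hm he (Q.mem_arc θ)
    (Set.left_mem_Icc.mpr (Q.mono.monotone (by omega))) (Q.idx_le θ)

variable (X : SRep k Q)
  (hx : ∀ ⦃θ φ : ℝ⦄ (h : Q.covRel θ φ), Function.Bijective (X.map h))

/-- The canonical isomorphism from the value at the base gridpoint of the arc of `θ`
to the value at `θ`. -/
def linkE (θ : ℝ) : X.obj (Q.α (Q.idx θ)) ≃ₗ[k] X.obj θ :=
  if h : Q.m = 0 ∨ ¬ Even (Q.idx θ) then
    LinearEquiv.ofBijective _ (hx (link_cov_up θ h))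
  else
    (LinearEquiv.ofBijective _ (hx (link_cov_down θ
      (by push_neg at h; exact h.1) (by push_neg at h; exact h.2)))).symm

lemma link_self {θ : ℝ} (hself : Q.α (Q.idx θ) = θ) (u : X.obj (Q.α (Q.idx θ))) :
    X.linkE hx θ u = X.castO hself u := by
  unfold linkE
  split_ifs with h
  · simp only [LinearEquiv.ofBijective_apply]
    exact X.map_eqpoints hself _ u
  · rw [LinearEquiv.symm_apply_eq]
    simp only [LinearEquiv.ofBijective_apply]
    rw [X.map_eqpoints hself.symm _ (X.castO hself u), X.castO_castO]
    exact (X.castO_self _ u).symm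

lemma link_self_symm {θ : ℝ} (hself : Q.α (Q.idx θ) = θ) (u : X.obj θ) :
    (X.linkE hx θ).symm u = X.castO hself.symm u := by
  rw [LinearEquiv.symm_apply_eq, X.link_self hx hself, X.castO_castO]
  exact (X.castO_self _ u).symm

lemma link_per (θ : ℝ)
    (hpf : Q.α (Q.idx (θ + 2 * Real.pi)) = Q.α (Q.idx θ) + 2 * Real.pi)
    (u : X.obj (Q.α (Q.idx (θ + 2 * Real.pi)))) :
    X.per θ (X.linkE hx (θ + 2 * Real.pi) u)
      = X.linkE hx θ (X.per (Q.α (Q.idx θ)) (X.castO hpf u)) := by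
  have hidx : Q.idx (θ + 2 * Real.pi) = Q.idx θ + Q.periodN := Q.idx_shift θ
  have hcond : (Q.m = 0 ∨ ¬ Even (Q.idx (θ + 2 * Real.pi)))
      ↔ (Q.m = 0 ∨ ¬ Even (Q.idx θ)) := by
    rw [hidx, ← step_cond_iff]
  unfold linkE
  by_cases h : Q.m = 0 ∨ ¬ Even (Q.idx θ)
  · rw [dif_pos h, dif_pos (hcond.mpr h)]
    simp only [LinearEquiv.ofBijective_apply]
    have hup : Q.covRel (Q.α (Q.idx θ)) θ := link_cov_up θ h
    have hs : Q.covRel (Q.α (Q.idx θ) + 2 * Real.pi) (θ + 2 * Real.pi) := Q.covRel_shift hup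
    rw [X.per_map_apply hup hs]
    exact congrArg (X.per θ)
      (X.map_castO hpf rfl (link_cov_up (θ + 2 * Real.pi) (hcond.mpr h)) hs u).symm
  · rw [dif_neg h, dif_neg (fun hh => h (hcond.mp hh))]
    push_neg at h
    rw [LinearEquiv.eq_symm_apply]
    simp only [LinearEquiv.ofBijective_apply]
    have hdown : Q.covRel θ (Q.α (Q.idx θ)) := link_cov_down θ h.1 h.2
    have hs : Q.covRel (θ + 2 * Real.pi) (Q.α (Q.idx θ) + 2 * Real.pi) :=
      Q.covRel_shift hdown
    have hd2 : Q.covRel (θ + 2 * Real.pi) (Q.α (Q.idx (θ + 2 * Real.pi))) :=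
      link_cov_down (θ + 2 * Real.pi) h.1 (by rw [hidx, even_add_P]; exact h.2)
    set y := (LinearEquiv.ofBijective _ (hx hd2)).symm u with hy
    have : u = X.map hd2 y := ((LinearEquiv.ofBijective _ (hx hd2)).apply_symm_apply u).symm
    rw [this, X.per_map_apply hdown hs]
    exact congrArg (X.per (Q.α (Q.idx θ)))
      (X.map_castO (rfl : θ + 2*Real.pi = θ + 2*Real.pi) hpf hd2 hs y)

end SRep

namespace SRep

variable {k : Type} [Field k] {Q : AtR}
variable (V W : SRep k Q)
  (hv : ∀ ⦃θ φ : ℝ⦄ (h : Q.covRel θ φ), Function.Bijective (V.map h))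
  (hw : ∀ ⦃θ φ : ℝ⦄ (h : Q.covRel θ φ), Function.Bijective (W.map h))
  (A : V.obj (Q.α 0) ≃ₗ[k] W.obj (Q.α 0))

/-- The isomorphism family extending the conjugation `Bfam` to all points. -/
def efam (θ : ℝ) : V.obj θ ≃ₗ[k] W.obj θ :=
  ((V.linkE hv θ).symm.trans (Bfam V W hv hw A (Q.idx θ))).trans (W.linkE hw θ)

lemma efam_per
    (hA : ∀ v, A (V.monodromy hv v) = W.monodromy hw (A v))
    (θ : ℝ) (v : V.obj (θ + 2 * Real.pi)) :
    efam V W hv hw A θ (V.per θ v)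
      = W.per θ (efam V W hv hw A (θ + 2 * Real.pi) v) := by
  have hidx : Q.idx (θ + 2 * Real.pi) = Q.idx θ + Q.periodN := Q.idx_shift θ
  have hpf : Q.α (Q.idx (θ + 2 * Real.pi)) = Q.α (Q.idx θ) + 2 * Real.pi := by
    rw [hidx, Q.α_addP]
  have hr : Q.α (Q.idx (θ + 2 * Real.pi)) = Q.α (Q.idx θ + Q.periodN) :=
    congrArg Q.α hidx
  set u := (V.linkE hv (θ + 2 * Real.pi)).symm v with hu
  have hv' : v = V.linkE hv (θ + 2 * Real.pi) u := by
    rw [hu, LinearEquiv.apply_symm_apply]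
  rw [hv']
  unfold efam
  simp only [LinearEquiv.trans_apply, LinearEquiv.symm_apply_apply]
  rw [V.link_per hv θ hpf u, LinearEquiv.symm_apply_apply, W.link_per hw θ hpf]
  have sp1 : V.castO hpf u = V.castO (Q.α_addP (Q.idx θ)) (V.castO hr u) := by
    rw [V.castO_castO]
  rw [sp1, Bfam_per V W hv hw A hA (Q.idx θ) (V.castO hr u),
    Bfam_cast V W hv hw A hidx hr u, W.castO_castO]

end SRep

namespace SRep

variable {k : Type} [Field k] {Q : AtR}
variable (V W : SRep k Q)
  (hv : ∀ ⦃θ φ : ℝ⦄ (h : Q.covRel θ φ), Function.Bijective (V.map h))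
  (hw : ∀ ⦃θ φ : ℝ⦄ (h : Q.covRel θ φ), Function.Bijective (W.map h))
  (A : V.obj (Q.α 0) ≃ₗ[k] W.obj (Q.α 0))

lemma efam_castO {a b : ℝ} (h : a = b) (x : V.obj a) :
    efam V W hv hw A b (V.castO h x) = W.castO h (efam V W hv hw A a x) := by
  subst h; rfl

lemma efam_eqpoints {θ φ : ℝ} (hθφ : θ = φ) (h : Q.covRel θ φ) (v : V.obj θ) :
    efam V W hv hw A φ (V.map h v) = W.map h (efam V W hv hw A θ v) := by
  rw [V.map_eqpoints hθφ h v, W.map_eqpoints hθφ h, efam_castO]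

end SRep

namespace SRep

variable {k : Type} [Field k] {Q : AtR}

lemma map_comp_apply (V : SRep k Q) {θ φ ψ : ℝ} (h1 : Q.covRel θ φ) (h2 : Q.covRel φ ψ)
    (h3 : Q.covRel θ ψ) (x : V.obj θ) :
    V.map h2 (V.map h1 x) = V.map h3 x :=
  (LinearMap.congr_fun (V.map_comp h1 h2 h3) x).symm

variable (X : SRep k Q)
  (hx : ∀ ⦃θ φ : ℝ⦄ (h : Q.covRel θ φ), Function.Bijective (X.map h))

lemma link_up_apply (θ : ℝ) (h : Q.m = 0 ∨ ¬ Even (Q.idx θ)) (u : X.obj (Q.α (Q.idx θ))) :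
    X.linkE hx θ u = X.map (link_cov_up θ h) u := by
  unfold linkE
  rw [dif_pos h]
  rfl

lemma link_down_symm_apply (θ : ℝ) (hm : Q.m ≠ 0) (he : Even (Q.idx θ)) (w : X.obj θ) :
    (X.linkE hx θ).symm w = X.map (link_cov_down θ hm he) w := by
  unfold linkE
  rw [dif_neg (by push_neg; exact ⟨hm, he⟩ : ¬ (Q.m = 0 ∨ ¬ Even (Q.idx θ)))]
  rfl

end SRep

namespace SRep

variable {k : Type} [Field k] {Q : AtR}
variable (V W : SRep k Q)
  (hv : ∀ ⦃θ φ : ℝ⦄ (h : Q.covRel θ φ), Function.Bijective (V.map h))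
  (hw : ∀ ⦃θ φ : ℝ⦄ (h : Q.covRel θ φ), Function.Bijective (W.map h))
  (A : V.obj (Q.α 0) ≃ₗ[k] W.obj (Q.α 0))

lemma efam_nat0_same (hm : Q.m = 0) {θ φ : ℝ} (h : Q.covRel θ φ)
    (hi : Q.idx θ = Q.idx φ) (v : V.obj θ) :
    efam V W hv hw A φ (V.map h v) = W.map h (efam V W hv hw A θ v) := by
  have hb : Q.α (Q.idx θ) = Q.α (Q.idx φ) := congrArg Q.α hi
  have h₃ : Q.covRel (Q.α (Q.idx θ)) φ :=
    Q.covRel_of_le hm (le_trans (Q.idx_le θ) (Q.le_of_covRel hm h))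
  set u := (V.linkE hv θ).symm v with hu
  have hv' : v = V.map (link_cov_up θ (Or.inl hm)) u := by
    rw [hu, ← V.link_up_apply hv θ (Or.inl hm), LinearEquiv.apply_symm_apply]
  simp only [efam, LinearEquiv.trans_apply]
  have s1 : (V.linkE hv φ).symm (V.map h v) = V.castO hb u := by
    rw [LinearEquiv.symm_apply_eq, V.link_up_apply hv φ (Or.inl hm), hv',
      map_comp_apply V (link_cov_up θ (Or.inl hm)) h h₃,
      V.map_castO hb rfl h₃ (link_cov_up φ (Or.inl hm))]
    exact (V.castO_self _ _).symm
  rw [s1, Bfam_cast V W hv hw A hi hb u]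
  rw [W.link_up_apply hw φ (Or.inl hm),
    W.map_castO hb rfl (Q.covRel_of_le hm (le_trans (Q.idx_le θ) (Q.le_of_covRel hm h)))
      (link_cov_up φ (Or.inl hm)),
    W.castO_self, W.link_up_apply hw θ (Or.inl hm),
    map_comp_apply W (link_cov_up θ (Or.inl hm)) h h₃]

lemma efam_nat0_grid (hm : Q.m = 0) (θ : ℝ) (h : Q.covRel θ (Q.α (Q.idx θ + 1)))
    (v : V.obj θ) :
    efam V W hv hw A (Q.α (Q.idx θ + 1)) (V.map h v)
      = W.map h (efam V W hv hw A θ v) := by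
  have hself : Q.α (Q.idx (Q.α (Q.idx θ + 1))) = Q.α (Q.idx θ + 1) :=
    congrArg Q.α (Q.idx_α (Q.idx θ + 1))
  have h₃ : Q.covRel (Q.α (Q.idx θ)) (Q.α (Q.idx θ + 1)) :=
    Q.covRel_of_le hm (Q.mono.monotone (by omega))
  set u := (V.linkE hv θ).symm v with hu
  have hv' : v = V.map (link_cov_up θ (Or.inl hm)) u := by
    rw [hu, ← V.link_up_apply hv θ (Or.inl hm), LinearEquiv.apply_symm_apply]
  simp only [efam, LinearEquiv.trans_apply]
  have s1 : (V.linkE hv (Q.α (Q.idx θ + 1))).symm (V.map h v)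
      = V.castO hself.symm (V.map h₃ u) := by
    rw [V.link_self_symm hv hself]
    exact congrArg _ (by rw [hv', map_comp_apply V (link_cov_up θ (Or.inl hm)) h h₃])
  rw [s1, Bfam_cast V W hv hw A (Q.idx_α (Q.idx θ + 1)).symm hself.symm (V.map h₃ u)]
  have sv : V.map h₃ u = V.step hv (Q.idx θ) u := by
    unfold SRep.step
    rw [dif_pos (Or.inl hm)]
    rfl
  have sw : ∀ z, W.step hw (Q.idx θ) z = W.map h₃ z := by
    intro z
    unfold SRep.step
    rw [dif_pos (Or.inl hm)]
    rfl
  rw [sv, Bfam_step, sw, W.link_self hw hself, W.castO_castO, W.castO_self,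
    W.link_up_apply hw θ (Or.inl hm),
    map_comp_apply W (link_cov_up θ (Or.inl hm)) h h₃]

lemma efam_nat0 (hm : Q.m = 0) : ∀ (n : ℕ) {θ φ : ℝ} (h : Q.covRel θ φ),
    Q.idx φ = Q.idx θ + n → ∀ v : V.obj θ,
    efam V W hv hw A φ (V.map h v) = W.map h (efam V W hv hw A θ v) := by
  intro n
  induction n with
  | zero =>
      intro θ φ h hi v
      exact efam_nat0_same V W hv hw A hm h (by omega) v
  | succ n ih =>
      intro θ φ h hi v
      have hθψ : Q.covRel θ (Q.α (Q.idx θ + 1)) :=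
        Q.covRel_of_le hm (le_of_lt (Q.lt_idx_succ θ))
      have hψφ : Q.covRel (Q.α (Q.idx θ + 1)) φ :=
        Q.covRel_of_le hm (le_trans (Q.mono.monotone (by push_cast at hi ⊢; omega))
          (Q.idx_le φ))
      rw [← map_comp_apply V hθψ hψφ h v,
        ih hψφ (by rw [Q.idx_α]; push_cast at hi ⊢; omega) (V.map hθψ v),
        efam_nat0_grid V W hv hw A hm θ hθψ v,
        map_comp_apply W hθψ hψφ h]

end SRep

namespace SRep

variable {k : Type} [Field k] {Q : AtR}
variable (X : SRep k Q)
  (hx : ∀ ⦃θ φ : ℝ⦄ (h : Q.covRel θ φ), Function.Bijective (X.map h))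

/-- Conjugating a map by the links, same-arc case. -/
lemma link_conj_same (hm : Q.m ≠ 0) {θ φ : ℝ} (h : Q.covRel θ φ)
    (hi : Q.idx θ = Q.idx φ) (hb : Q.α (Q.idx θ) = Q.α (Q.idx φ)) (v : X.obj θ) :
    (X.linkE hx φ).symm (X.map h v) = X.castO hb ((X.linkE hx θ).symm v) := by
  by_cases he : Even (Q.idx θ)
  · have heφ : Even (Q.idx φ) := hi ▸ he
    have h₃ : Q.covRel θ (Q.α (Q.idx φ)) := hi ▸ link_cov_down θ hm he
    rw [X.link_down_symm_apply hx φ hm heφ, X.link_down_symm_apply hx θ hm he,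
      map_comp_apply X h (link_cov_down φ hm heφ) h₃,
      ← X.map_castO (rfl : θ = θ) hb (link_cov_down θ hm he) h₃ v]
    rfl
  · have hoφ : ¬ Even (Q.idx φ) := hi ▸ he
    have h₃ : Q.covRel (Q.α (Q.idx θ)) φ := by
      refine Q.covRel_arc_up hm he ?_ ?_ ?_
      · exact Set.left_mem_Icc.mpr (Q.mono.monotone (by omega))
      · rw [hi]; exact Q.mem_arc φ
      · rw [hb]; exact Q.idx_le φ
    have hv' : v = X.map (link_cov_up θ (Or.inr he)) ((X.linkE hx θ).symm v) := by
      rw [← X.link_up_apply hx θ (Or.inr he), LinearEquiv.apply_symm_apply]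
    rw [LinearEquiv.symm_apply_eq, X.link_up_apply hx φ (Or.inr hoφ),
      X.map_castO hb rfl h₃ (link_cov_up φ (Or.inr hoφ)), X.castO_self]
    conv_lhs => rw [hv']
    exact map_comp_apply X (link_cov_up θ (Or.inr he)) h h₃ _

/-- Conjugating a map by the links, going up to the next arc. -/
lemma link_conj_up (hm : Q.m ≠ 0) {θ φ : ℝ} (h : Q.covRel θ φ)
    (ho : ¬ Even (Q.idx θ)) (hiφ : Q.idx φ = Q.idx θ + 1)
    (hφtop : φ = Q.α (Q.idx θ + 1)) (hr : Q.α (Q.idx θ + 1) = Q.α (Q.idx φ))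
    (v : X.obj θ) :
    (X.linkE hx φ).symm (X.map h v)
      = X.castO hr (X.step hx (Q.idx θ) ((X.linkE hx θ).symm v)) := by
  have hselfφ : Q.α (Q.idx φ) = φ := by rw [← hr, ← hφtop]
  have h₃ : Q.covRel (Q.α (Q.idx θ)) φ := by
    refine Q.covRel_arc_up hm ho ?_ ?_ ?_
    · exact Set.left_mem_Icc.mpr (Q.mono.monotone (by omega))
    · rw [hφtop]; exact Set.right_mem_Icc.mpr (Q.mono.monotone (by omega))
    · rw [hφtop]; exact Q.mono.monotone (by omega)
  have hs : Q.covRel (Q.α (Q.idx θ)) (Q.α (Q.idx θ + 1)) :=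
    AtR.covRel_up (Q.idx θ) (Or.inr ho)
  have hv' : v = X.map (link_cov_up θ (Or.inr ho)) ((X.linkE hx θ).symm v) := by
    rw [← X.link_up_apply hx θ (Or.inr ho), LinearEquiv.apply_symm_apply]
  rw [X.link_self_symm hx hselfφ]
  have hstep : X.step hx (Q.idx θ) ((X.linkE hx θ).symm v)
      = X.map hs ((X.linkE hx θ).symm v) := by
    unfold SRep.step
    rw [dif_pos (Or.inr ho)]
    rfl
  have e7 : X.map hs ((X.linkE hx θ).symm v)
      = X.castO hφtop (X.map h₃ ((X.linkE hx θ).symm v)) :=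
    X.map_castO rfl hφtop h₃ hs ((X.linkE hx θ).symm v)
  rw [hstep, e7, X.castO_castO]
  conv_lhs => rw [hv']
  rw [map_comp_apply X (link_cov_up θ (Or.inr ho)) h h₃]

/-- Conjugating a map by the links, going down to the previous arc. -/
lemma link_conj_down (hm : Q.m ≠ 0) {θ φ : ℝ} (h : Q.covRel θ φ)
    (heφ : Even (Q.idx φ)) (hiθ : Q.idx θ = Q.idx φ + 1)
    (hθtop : θ = Q.α (Q.idx φ + 1)) (hr : Q.α (Q.idx θ) = Q.α (Q.idx φ + 1))
    (v : X.obj θ) :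
    (X.linkE hx φ).symm (X.map h v)
      = (X.step hx (Q.idx φ)).symm (X.castO hr ((X.linkE hx θ).symm v)) := by
  have hselfθ : Q.α (Q.idx θ) = θ := by rw [hr, ← hθtop]
  have hd : Q.covRel (Q.α (Q.idx φ + 1)) (Q.α (Q.idx φ)) :=
    AtR.covRel_down (Q.idx φ) hm heφ
  have h₃ : Q.covRel θ (Q.α (Q.idx φ)) := by
    refine Q.covRel_arc_down hm heφ ?_ ?_ ?_
    · rw [hθtop]; exact Set.right_mem_Icc.mpr (Q.mono.monotone (by omega))
    · exact Set.left_mem_Icc.mpr (Q.mono.monotone (by omega))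
    · rw [hθtop]; exact Q.mono.monotone (by omega)
  have hstep : ∀ y : X.obj (Q.α (Q.idx φ + 1)),
      (X.step hx (Q.idx φ)).symm y = X.map hd y := by
    intro y
    unfold SRep.step
    rw [dif_neg (by push_neg; exact ⟨hm, heφ⟩ : ¬ (Q.m = 0 ∨ ¬ Even (Q.idx φ)))]
    rfl
  rw [hstep, X.link_self_symm hx hselfθ, X.castO_castO]
  have e8 : X.map hd (X.castO (hselfθ.symm.trans hr) v) = X.map h₃ v := by
    rw [X.map_castO (hselfθ.symm.trans hr) rfl h₃ hd v]
    exact X.castO_self _ _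
  rw [e8, X.link_down_symm_apply hx φ hm heφ,
    map_comp_apply X h (link_cov_down φ hm heφ) h₃]

end SRep

namespace SRep

variable {k : Type} [Field k] {Q : AtR}
variable (V W : SRep k Q)
  (hv : ∀ ⦃θ φ : ℝ⦄ (h : Q.covRel θ φ), Function.Bijective (V.map h))
  (hw : ∀ ⦃θ φ : ℝ⦄ (h : Q.covRel θ φ), Function.Bijective (W.map h))
  (A : V.obj (Q.α 0) ≃ₗ[k] W.obj (Q.α 0))

lemma efam_glue_same (hm : Q.m ≠ 0) {θ φ : ℝ} (h : Q.covRel θ φ)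
    (hi : Q.idx θ = Q.idx φ) (v : V.obj θ) :
    efam V W hv hw A φ (V.map h v) = W.map h (efam V W hv hw A θ v) := by
  have hb : Q.α (Q.idx θ) = Q.α (Q.idx φ) := congrArg Q.α hi
  simp only [efam, LinearEquiv.trans_apply]
  rw [V.link_conj_same hv hm h hi hb v, Bfam_cast V W hv hw A hi hb]
  apply (W.linkE hw φ).symm.injective
  rw [LinearEquiv.symm_apply_apply, W.link_conj_same hw hm h hi hb,
    LinearEquiv.symm_apply_apply]

lemma efam_glue_up (hm : Q.m ≠ 0) {θ φ : ℝ} (h : Q.covRel θ φ)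
    (ho : ¬ Even (Q.idx θ)) (hiφ : Q.idx φ = Q.idx θ + 1)
    (hφtop : φ = Q.α (Q.idx θ + 1)) (v : V.obj θ) :
    efam V W hv hw A φ (V.map h v) = W.map h (efam V W hv hw A θ v) := by
  have hr : Q.α (Q.idx θ + 1) = Q.α (Q.idx φ) := congrArg Q.α hiφ.symm
  simp only [efam, LinearEquiv.trans_apply]
  rw [V.link_conj_up hv hm h ho hiφ hφtop hr v,
    Bfam_cast V W hv hw A hiφ.symm hr, Bfam_step]
  apply (W.linkE hw φ).symm.injective
  rw [LinearEquiv.symm_apply_apply, W.link_conj_up hw hm h ho hiφ hφtop hr,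
    LinearEquiv.symm_apply_apply]

lemma efam_glue_down (hm : Q.m ≠ 0) {θ φ : ℝ} (h : Q.covRel θ φ)
    (heφ : Even (Q.idx φ)) (hiθ : Q.idx θ = Q.idx φ + 1)
    (hθtop : θ = Q.α (Q.idx φ + 1)) (v : V.obj θ) :
    efam V W hv hw A φ (V.map h v) = W.map h (efam V W hv hw A θ v) := by
  have hr : Q.α (Q.idx θ) = Q.α (Q.idx φ + 1) := congrArg Q.α hiθ
  simp only [efam, LinearEquiv.trans_apply]
  rw [V.link_conj_down hv hm h heφ hiθ hθtop hr v]
  have hcomm : Bfam V W hv hw A (Q.idx φ)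
        ((V.step hv (Q.idx φ)).symm (V.castO hr ((V.linkE hv θ).symm v)))
      = (W.step hw (Q.idx φ)).symm (W.castO hr
          (Bfam V W hv hw A (Q.idx θ) ((V.linkE hv θ).symm v))) := by
    apply (W.step hw (Q.idx φ)).injective
    rw [LinearEquiv.apply_symm_apply, ← Bfam_step, LinearEquiv.apply_symm_apply,
      Bfam_cast V W hv hw A hiθ hr]
  rw [hcomm]
  apply (W.linkE hw φ).symm.injective
  rw [LinearEquiv.symm_apply_apply, W.link_conj_down hw hm h heφ hiθ hθtop hr,
    LinearEquiv.symm_apply_apply]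

lemma efam_nat {θ φ : ℝ} (h : Q.covRel θ φ) (v : V.obj θ) :
    efam V W hv hw A φ (V.map h v) = W.map h (efam V W hv hw A θ v) := by
  by_cases hm : Q.m = 0
  · have hle : θ ≤ φ := Q.le_of_covRel hm h
    have hii : Q.idx θ ≤ Q.idx φ := Q.le_idx φ (le_trans (Q.idx_le θ) hle)
    exact efam_nat0 V W hv hw A hm (Q.idx φ - Q.idx θ).toNat h (by omega) v
  · have h' := h
    unfold AtR.covRel at h'
    rw [if_neg hm] at h'
    obtain ⟨j, hθm, hφm, hor⟩ := h'
    rcases hor with ⟨he, hle⟩ | ⟨ho, hle⟩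
    · -- even arc: maps go down
      rcases eq_or_lt_of_le hφm.2 with hφtop | hφlt
      · have hθφ : θ = φ := le_antisymm (by rw [hφtop]; exact hθm.2) hle
        exact efam_eqpoints V W hv hw A hθφ h v
      · have hiφ : Q.idx φ = j := Q.idx_unique hφm.1 hφlt
        rcases eq_or_lt_of_le hθm.2 with hθtop | hθlt
        · have hiθ : Q.idx θ = j + 1 := by rw [hθtop]; exact Q.idx_α (j+1)
          exact efam_glue_down V W hv hw A hm h (by rw [hiφ]; exact he) (by omega)
            (by rw [hiφ]; exact hθtop) v
        · have hiθ : Q.idx θ = j := Q.idx_unique hθm.1 hθlt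
          exact efam_glue_same V W hv hw A hm h (by omega) v
    · -- odd arc: maps go up
      rcases eq_or_lt_of_le hθm.2 with hθtop | hθlt
      · have hθφ : θ = φ := le_antisymm hle (by rw [hθtop]; exact hφm.2)
        exact efam_eqpoints V W hv hw A hθφ h v
      · have hiθ : Q.idx θ = j := Q.idx_unique hθm.1 hθlt
        rcases eq_or_lt_of_le hφm.2 with hφtop | hφlt
        · have hiφ : Q.idx φ = j + 1 := by rw [hφtop]; exact Q.idx_α (j+1)
          exact efam_glue_up V W hv hw A hm h (by rw [hiθ]; exact ho) (by omega)
            (by rw [hiθ]; exact hφtop) v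
        · have hiφ : Q.idx φ = j := Q.idx_unique hφm.1 hφlt
          exact efam_glue_same V W hv hw A hm h (by omega) v

end SRep
/-! ## Statement 1 -/

/-- Two Jordan cells are isomorphic if and only if their monodromy automorphisms
at `e^{iα₀}` are conjugate. -/
theorem jordan_iso_iff {k : Type} [Field k] {Q : AtR} (V W : SRep k Q)
    (hV : SRep.IsJordanCell V) (hW : SRep.IsJordanCell W) :
    SRep.RepIso V W ↔ ∃ A : V.obj (Q.α 0) ≃ₗ[k] W.obj (Q.α 0),
      ∀ v : V.obj (Q.α 0),
        V.monodromy hV.bij v = A.symm (W.monodromy hW.bij (A v)) := by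
  constructor
  · rintro ⟨e, hmap, hper⟩
    refine ⟨e (Q.α 0), fun v => ?_⟩
    rw [← SRep.e_monodromy e hmap hV.bij hW.bij hper v, LinearEquiv.symm_apply_apply]
  · rintro ⟨A, hA⟩
    have hA' : ∀ v, A (V.monodromy hV.bij v) = W.monodromy hW.bij (A v) := by
      intro v
      rw [hA v, LinearEquiv.apply_symm_apply]
    refine ⟨fun θ => SRep.efam V W hV.bij hW.bij A θ, ?_, ?_⟩
    · intro θ φ h v
      exact SRep.efam_nat V W hV.bij hW.bij A h v
    · intro θ v
      exact SRep.efam_per V W hV.bij hW.bij A hA' θ v
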